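/- arXiv:1606.05023 — 6 statements merged into one kernel-verified Lean document; each statement's English description precedes it below -/
import Mathlib

section
/- Let X be a random vector in ℝ^M whose law is absolutely continuous with density f, and suppose the event that two coordinates of X coincide has probability zero. Then the law of sort(X) is absolutely continuous with density s ↦ ∑_{π ∈ S_M} f(s ∘ π) on the ordered chamber C = {s : s₁ < s₂ < ⋯ < s_M} and 0 off C. (Paper equation for f_{S⃗}: the density of ordered arrivals is obtained by 'folding' the unordered density over all M! permutations.) -/
open MeasureTheory

/-- The nondecreasing rearrangement of a vector `x ∈ ℝ^M`. -/
noncomputable def sortVec {M : ℕ} (x : Fin M → ℝ) : Fin M → ℝ :=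
  x ∘ Tuple.sort x

noncomputable def sortRep {M : ℕ} (x : Fin M → ℝ) : Fin M → ℝ :=
  ∑ π : Equiv.Perm (Fin M), if StrictMono (x ∘ π) then x ∘ π else 0

lemma measurableSet_strictMonoPerm {M : ℕ} (π : Equiv.Perm (Fin M)) :
    MeasurableSet {x : Fin M → ℝ | StrictMono (x ∘ π)} := by
  have : {x : Fin M → ℝ | StrictMono (x ∘ π)} =
      ⋂ (i : Fin M) (j : Fin M) (_ : i < j), {x | x (π i) < x (π j)} := by
    ext x
    simp only [Set.mem_setOf_eq, Set.mem_iInter]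
    exact ⟨fun h i j hij => h hij, fun h a b hab => h a b hab⟩
  rw [this]
  exact MeasurableSet.iInter fun i => MeasurableSet.iInter fun j =>
    MeasurableSet.iInter fun _ =>
      measurableSet_lt (measurable_pi_apply _) (measurable_pi_apply _)

lemma sortRep_measurable {M : ℕ} : Measurable (sortRep (M := M)) := by
  unfold sortRep
  refine Finset.measurable_sum _ fun π _ => Measurable.ite (measurableSet_strictMonoPerm π) ?_ ?_
  · exact measurable_pi_lambda _ fun i => measurable_pi_apply _
  · exact measurable_const

lemma injective_of_strictMonoPerm {M : ℕ} {x : Fin M → ℝ} {π : Equiv.Perm (Fin M)}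
    (h : StrictMono (x ∘ π)) : Function.Injective x := by
  intro a b hab
  have h2 : (x ∘ π) (π.symm a) = (x ∘ π) (π.symm b) := by simpa using hab
  simpa using h.injective h2

lemma strictMono_sortVec {M : ℕ} {x : Fin M → ℝ} (hx : Function.Injective x) :
    StrictMono (sortVec x) :=
  (Tuple.monotone_sort x).strictMono_of_injective (hx.comp (Equiv.injective _))

lemma comp_eq_sortVec {M : ℕ} {x : Fin M → ℝ} {π : Equiv.Perm (Fin M)}
    (h : Monotone (x ∘ π)) : x ∘ π = sortVec x :=
  Tuple.comp_sort_eq_comp_iff_monotone.mpr h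

lemma perm_unique {M : ℕ} {x : Fin M → ℝ} (hx : Function.Injective x)
    {π ρ : Equiv.Perm (Fin M)} (h1 : StrictMono (x ∘ π)) (h2 : StrictMono (x ∘ ρ)) :
    π = ρ := by
  have e : x ∘ π = x ∘ ρ := (comp_eq_sortVec h1.monotone).trans (comp_eq_sortVec h2.monotone).symm
  exact Equiv.ext fun i => hx (congrFun e i)

lemma sortRep_eq {M : ℕ} {x : Fin M → ℝ} (hx : Function.Injective x) :
    sortRep x = sortVec x := by
  have hs : StrictMono (x ∘ Tuple.sort x) := strictMono_sortVec hx
  unfold sortRep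
  rw [Finset.sum_eq_single (Tuple.sort x)]
  · rw [if_pos hs]; rfl
  · intro π _ hπ
    rw [if_neg]
    intro h
    exact hπ (perm_unique hx h hs)
  · simp


/-- **Density of the ordered arrivals by folding.**  If `X` has density `f` on `ℝ^M` and
almost surely no two coordinates coincide, then `sort(X)` has density
`s ↦ ∑_{π} f(s ∘ π)` on the ordered chamber `C = {s : s₁ < ⋯ < s_M}` and `0` off `C`. -/
theorem sorted_density_folding {M : ℕ} (hM : 1 ≤ M)
    {Ω : Type*} [MeasurableSpace Ω] (P : Measure Ω) [IsProbabilityMeasure P]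
    (X : Ω → Fin M → ℝ) (hX : Measurable X)
    (f : (Fin M → ℝ) → ℝ) (hfmeas : Measurable f) (hf0 : ∀ x, 0 ≤ f x)
    (hlaw : Measure.map X P = volume.withDensity (fun x => ENNReal.ofReal (f x)))
    (hdiag : P {ω | ∃ i j, i ≠ j ∧ X ω i = X ω j} = 0) :
    Measure.map (fun ω => sortVec (X ω)) P
      = volume.withDensity (fun s =>
          if StrictMono s then ∑ π : Equiv.Perm (Fin M), ENNReal.ofReal (f (s ∘ π))
          else 0) := by
  classical
  set μ : Measure (Fin M → ℝ) := volume.withDensity (fun x => ENNReal.ofReal (f x)) with hμ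
  have hninj : ∀ x : Fin M → ℝ, (¬ Function.Injective x) ↔ ∃ i j, i ≠ j ∧ x i = x j := by
    intro x
    constructor
    · intro h
      simp only [Function.Injective, not_forall] at h
      obtain ⟨a, b, hab, hne⟩ := h
      exact ⟨a, b, hne, hab⟩
    · rintro ⟨i, j, hij, hx⟩ h
      exact hij (h hx)
  have hDmeas : MeasurableSet {x : Fin M → ℝ | ∃ i j, i ≠ j ∧ x i = x j} := by
    have : {x : Fin M → ℝ | ∃ i j, i ≠ j ∧ x i = x j} =
        ⋃ (i : Fin M) (j : Fin M) (_ : i ≠ j), {x | x i = x j} := by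
      ext x; simp
    rw [this]
    exact MeasurableSet.iUnion fun i => MeasurableSet.iUnion fun j =>
      MeasurableSet.iUnion fun _ =>
        measurableSet_eq_fun (measurable_pi_apply _) (measurable_pi_apply _)
  have hμdiag : μ {x : Fin M → ℝ | ¬ Function.Injective x} = 0 := by
    have hset : {x : Fin M → ℝ | ¬ Function.Injective x}
        = {x | ∃ i j, i ≠ j ∧ x i = x j} := by
      ext x; exact hninj x
    rw [hset, ← hlaw, Measure.map_apply hX hDmeas]
    exact hdiag
  -- step 1: replace sortVec by sortRep
  have hPinj : P {ω | ¬ Function.Injective (X ω)} = 0 := by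
    have : {ω | ¬ Function.Injective (X ω)} = {ω | ∃ i j, i ≠ j ∧ X ω i = X ω j} := by
      ext ω; exact hninj (X ω)
    rw [this]; exact hdiag
  have hae : (fun ω => sortVec (X ω)) =ᵐ[P] (fun ω => sortRep (X ω)) := by
    have h1 : ∀ᵐ ω ∂P, Function.Injective (X ω) := by
      rw [MeasureTheory.ae_iff]
      exact hPinj
    filter_upwards [h1] with ω hω
    exact (sortRep_eq hω).symm
  rw [Measure.map_congr hae,
    show (fun ω => sortRep (X ω)) = sortRep ∘ X from rfl,
    ← Measure.map_map sortRep_measurable hX, hlaw]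
  -- main computation
  set C : Set (Fin M → ℝ) := {s | StrictMono s} with hCdef
  have hCmeas : MeasurableSet C := by
    have h := measurableSet_strictMonoPerm (M := M) 1
    have : {x : Fin M → ℝ | StrictMono (x ∘ ⇑(1 : Equiv.Perm (Fin M)))} = C := by
      ext x; simp [hCdef]
    rwa [this] at h
  have hTmeas : ∀ π : Equiv.Perm (Fin M), Measurable (fun x : Fin M → ℝ => x ∘ π) :=
    fun π => measurable_pi_lambda _ fun i => measurable_pi_apply _
  refine Measure.ext fun A hA => ?_
  rw [Measure.map_apply sortRep_measurable hA, withDensity_apply _ hA]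
  have hkey : sortRep ⁻¹' A ∩ {x : Fin M → ℝ | Function.Injective x}
      = ⋃ π : Equiv.Perm (Fin M), (fun x : Fin M → ℝ => x ∘ π) ⁻¹' (A ∩ C) := by
    ext x
    simp only [Set.mem_inter_iff, Set.mem_preimage, Set.mem_iUnion, Set.mem_setOf_eq, hCdef]
    constructor
    · rintro ⟨hxA, hxinj⟩
      refine ⟨Tuple.sort x, ?_, strictMono_sortVec hxinj⟩
      rwa [sortRep_eq hxinj] at hxA
    · rintro ⟨π, hA', hsm⟩
      have hinj := injective_of_strictMonoPerm hsm
      refine ⟨?_, hinj⟩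
      rw [sortRep_eq hinj, ← comp_eq_sortVec hsm.monotone]
      exact hA'
  have hmain : μ (sortRep ⁻¹' A)
      = ∑ π : Equiv.Perm (Fin M), μ ((fun x : Fin M → ℝ => x ∘ π) ⁻¹' (A ∩ C)) := by
    have h1 : μ (sortRep ⁻¹' A ∩ {x : Fin M → ℝ | Function.Injective x})
        = μ (sortRep ⁻¹' A) := by
      apply measure_inter_conull
      have : {x : Fin M → ℝ | Function.Injective x}ᶜ
          = {x : Fin M → ℝ | ¬ Function.Injective x} := rfl
      rw [this]; exact hμdiag
    rw [← h1, hkey, measure_iUnion ?_ ?_, tsum_fintype]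
    · intro π ρ hne
      rw [Function.onFun]
      apply Set.disjoint_left.mpr
      rintro x hπ hρ
      simp only [Set.mem_preimage, Set.mem_inter_iff, Set.mem_setOf_eq, hCdef] at hπ hρ
      exact hne (perm_unique (injective_of_strictMonoPerm hπ.2) hπ.2 hρ.2)
    · intro π; exact (hTmeas π) (hA.inter hCmeas)
  have hterm : ∀ π : Equiv.Perm (Fin M),
      μ ((fun x : Fin M → ℝ => x ∘ π) ⁻¹' (A ∩ C))
        = ∫⁻ s in A ∩ C, ENNReal.ofReal (f (s ∘ π.symm)) := by
    intro π
    have hfe : ⇑(MeasurableEquiv.piCongrLeft (fun _ : Fin M => ℝ) π.symm)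
        = fun x : Fin M → ℝ => x ∘ π := by
      ext x i
      simp [MeasurableEquiv.piCongrLeft, Equiv.piCongrLeft, Equiv.piCongrLeft']
    have mp : MeasurePreserving (fun x : Fin M → ℝ => x ∘ π) volume volume := by
      have h := volume_measurePreserving_piCongrLeft (fun _ : Fin M => ℝ) π.symm
      rwa [hfe] at h
    have hemb : MeasurableEmbedding (fun x : Fin M → ℝ => x ∘ π) := by
      have h := (MeasurableEquiv.piCongrLeft (fun _ : Fin M => ℝ) π.symm).measurableEmbedding
      rwa [hfe] at h
    rw [hμ, withDensity_apply _ ((hTmeas π) (hA.inter hCmeas))]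
    have h := mp.setLIntegral_comp_preimage_emb hemb
      (fun s => ENNReal.ofReal (f (s ∘ π.symm))) (A ∩ C)
    have hfun : ∀ x : Fin M → ℝ, (x ∘ ⇑π) ∘ ⇑π.symm = x := by
      intro x; funext i; simp
    simp only [hfun] at h
    exact h
  have hrsum : ∀ s : Fin M → ℝ,
      ∑ π : Equiv.Perm (Fin M), ENNReal.ofReal (f (s ∘ π.symm))
        = ∑ π : Equiv.Perm (Fin M), ENNReal.ofReal (f (s ∘ π)) := by
    intro s
    have := Equiv.sum_comp (Equiv.inv (Equiv.Perm (Fin M)))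
      (fun π : Equiv.Perm (Fin M) => ENNReal.ofReal (f (s ∘ π)))
    simpa using this
  calc μ (sortRep ⁻¹' A)
      = ∑ π : Equiv.Perm (Fin M), ∫⁻ s in A ∩ C, ENNReal.ofReal (f (s ∘ π.symm)) := by
        rw [hmain]; exact Finset.sum_congr rfl fun π _ => hterm π
    _ = ∫⁻ s in A ∩ C, ∑ π : Equiv.Perm (Fin M), ENNReal.ofReal (f (s ∘ π.symm)) := by
        rw [lintegral_finset_sum]
        intro π _
        exact (hfmeas.comp (hTmeas π.symm)).ennreal_ofReal
    _ = ∫⁻ s in A ∩ C, ∑ π : Equiv.Perm (Fin M), ENNReal.ofReal (f (s ∘ π)) := by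
        exact lintegral_congr fun s => hrsum s
    _ = ∫⁻ s in A, (if StrictMono s then
          ∑ π : Equiv.Perm (Fin M), ENNReal.ofReal (f (s ∘ π)) else 0) := by
        have hind : ∀ s : Fin M → ℝ, (if StrictMono s then
            ∑ π : Equiv.Perm (Fin M), ENNReal.ofReal (f (s ∘ π)) else 0)
            = C.indicator (fun s => ∑ π : Equiv.Perm (Fin M), ENNReal.ofReal (f (s ∘ π))) s := by
          intro s
          rw [Set.indicator_apply]
          rfl
        rw [setLIntegral_congr_fun hA ?_, setLIntegral_indicator hCmeas, Set.inter_comm]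
        exact fun s _ => hind s
end

section
/- Let M ≥ 1, let g be a first-passage density (a probability density on ℝ with g(x) = 0 for x < 0), let t ∈ ℝ^M be launch times, and let s ∈ ℝ^M be arrival times. For each permutation π of {1,…,M} set w_π = ∏_{m=1}^M g(s_{π(m)} − t_m), and suppose W = ∑_π w_π > 0; define the probability mass function p_π = w_π / W. Let N = #{π : s_{π(m)} ≥ t_m for all m} be the number of admissible permutations. Then the Shannon entropy H(p) = −∑_π p_π log p_π satisfies H(p) ≤ log N; moreover, if g is the exponential density g(x) = μe^{−μx}·1{x ≥ 0} with μ > 0 (and N ≥ 1), then p is the uniform distribution on the set of admissible permutations and H(p) = log N. (Paper Theorem 'A General Upper Bound for H(Ω|s⃗,t)', inequality and the exponential equality case.) -/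
/-- **A general upper bound for the ordering entropy `H(Ω|s⃗,t)`.**  For a causal
first-passage density `g`, launch times `t` and arrivals `s`, the permutation
posterior `p_π = w_π / W` (with `w_π = ∏_m g(s_{π(m)} − t_m)`) has Shannon entropy
at most `log N`, where `N` is the number of admissible permutations; if `g` is the
exponential density with rate `μ > 0` (and `N ≥ 1`), then `p` is uniform on the
admissible permutations and the entropy equals `log N`. -/
theorem ordering_entropy_upper_bound {M : ℕ} (hM : 1 ≤ M)
    (g : ℝ → ℝ) (hg0 : ∀ x, 0 ≤ g x) (hgcausal : ∀ x < (0 : ℝ), g x = 0)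
    (hgdens : ∫ x, g x = 1)
    (t s : Fin M → ℝ)
    (w : Equiv.Perm (Fin M) → ℝ)
    (hw : ∀ π : Equiv.Perm (Fin M), w π = ∏ m, g (s (π m) - t m))
    (W : ℝ) (hW : W = ∑ π : Equiv.Perm (Fin M), w π) (hWpos : 0 < W)
    (p : Equiv.Perm (Fin M) → ℝ) (hp : ∀ π, p π = w π / W)
    (N : ℕ)
    (hN : N = (Finset.univ.filter
        (fun π : Equiv.Perm (Fin M) => ∀ m, t m ≤ s (π m))).card) :
    (-(∑ π : Equiv.Perm (Fin M), p π * Real.log (p π)) ≤ Real.log (N : ℝ))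
    ∧ (∀ μ : ℝ, 0 < μ →
        (∀ x : ℝ, g x = if 0 ≤ x then μ * Real.exp (-(μ * x)) else 0) →
        1 ≤ N →
        (∀ π : Equiv.Perm (Fin M),
            p π = if (∀ m, t m ≤ s (π m)) then 1 / (N : ℝ) else 0)
        ∧ -(∑ π : Equiv.Perm (Fin M), p π * Real.log (p π)) = Real.log (N : ℝ)) := by
  classical
  set A : Finset (Equiv.Perm (Fin M)) :=
    Finset.univ.filter (fun π : Equiv.Perm (Fin M) => ∀ m, t m ≤ s (π m)) with hA
  -- weights vanish off the admissible set
  have hw0 : ∀ π : Equiv.Perm (Fin M), π ∉ A → w π = 0 := by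
    intro π hπ
    simp only [hA, Finset.mem_filter, Finset.mem_univ, true_and, not_forall] at hπ
    obtain ⟨m, hm⟩ := hπ
    rw [hw]
    exact Finset.prod_eq_zero (Finset.mem_univ m) (hgcausal _ (by linarith))
  have hwnn : ∀ π : Equiv.Perm (Fin M), 0 ≤ w π := by
    intro π; rw [hw]; exact Finset.prod_nonneg fun m _ => hg0 _
  have hp0 : ∀ π : Equiv.Perm (Fin M), π ∉ A → p π = 0 := by
    intro π hπ; rw [hp, hw0 π hπ, zero_div]
  have hpnn : ∀ π : Equiv.Perm (Fin M), 0 ≤ p π := by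
    intro π; rw [hp]; exact div_nonneg (hwnn π) hWpos.le
  have hpsum : ∑ π : Equiv.Perm (Fin M), p π = 1 := by
    simp only [hp]
    rw [← Finset.sum_div, ← hW, div_self hWpos.ne']
  -- the support
  set S : Finset (Equiv.Perm (Fin M)) :=
    Finset.univ.filter (fun π : Equiv.Perm (Fin M) => 0 < p π) with hS
  have hSA : S ⊆ A := by
    intro π hπ
    simp only [hS, Finset.mem_filter, Finset.mem_univ, true_and] at hπ
    by_contra hnot
    rw [hp0 π hnot] at hπ; exact lt_irrefl 0 hπ
  have hSsum : ∑ π ∈ S, p π = 1 := by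
    rw [← hpsum]
    apply Finset.sum_filter_of_ne
    intro π _ hne
    exact lt_of_le_of_ne (hpnn π) (Ne.symm hne)
  have hSne : S.Nonempty := by
    by_contra h
    rw [Finset.not_nonempty_iff_eq_empty] at h
    rw [h, Finset.sum_empty] at hSsum
    norm_num at hSsum
  have hcardS : 1 ≤ S.card := Finset.card_pos.mpr hSne
  have hcardSN : S.card ≤ N := hN ▸ Finset.card_le_card hSA
  have hNpos : 0 < N := lt_of_lt_of_le hcardS hcardSN
  -- entropy sum restricted to the support
  have hent : ∀ (q : Equiv.Perm (Fin M) → ℝ),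
      (∀ π, π ∉ S → q π * Real.log (q π) = 0) →
      ∑ π : Equiv.Perm (Fin M), q π * Real.log (q π)
        = ∑ π ∈ S, q π * Real.log (q π) := by
    intro q hq
    symm
    apply Finset.sum_subset (Finset.subset_univ S)
    intro π _ hπ; exact hq π hπ
  have hzero : ∀ π : Equiv.Perm (Fin M), π ∉ S → p π * Real.log (p π) = 0 := by
    intro π hπ
    simp only [hS, Finset.mem_filter, Finset.mem_univ, true_and, not_lt] at hπ
    have : p π = 0 := le_antisymm hπ (hpnn π)
    rw [this]; ring
  have hrestrict := hent p hzero
  constructor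
  · -- Jensen's inequality for log
    have hjensen := (strictConcaveOn_log_Ioi.concaveOn).le_map_sum
      (t := S) (w := p) (p := fun π => (p π)⁻¹)
      (fun π _ => hpnn π) hSsum
      (by
        intro π hπ
        simp only [hS, Finset.mem_filter, Finset.mem_univ, true_and] at hπ
        exact Set.mem_Ioi.mpr (inv_pos.mpr hπ))
    have hLHS : ∑ π ∈ S, p π • Real.log (p π)⁻¹
        = -(∑ π ∈ S, p π * Real.log (p π)) := by
      rw [← Finset.sum_neg_distrib]
      apply Finset.sum_congr rfl
      intro π _
      rw [smul_eq_mul, Real.log_inv]; ring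
    have hRHS : ∑ π ∈ S, p π • (p π)⁻¹ = (S.card : ℝ) := by
      rw [Finset.sum_congr rfl (fun π hπ => ?_), Finset.sum_const, nsmul_eq_mul, mul_one]
      simp only [hS, Finset.mem_filter, Finset.mem_univ, true_and] at hπ
      rw [smul_eq_mul, mul_inv_cancel₀ hπ.ne']
    rw [hLHS, hRHS] at hjensen
    rw [hrestrict]
    refine le_trans hjensen ?_
    apply Real.log_le_log (by exact_mod_cast hcardS)
    exact_mod_cast hcardSN
  · -- exponential case
    intro μ hμ hexp hN1
    set c : ℝ := μ ^ M * Real.exp (-(μ * (∑ m, s m - ∑ m, t m))) with hc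
    have hcpos : 0 < c := by positivity
    have hwc : ∀ π ∈ A, w π = c := by
      intro π hπ
      simp only [hA, Finset.mem_filter, Finset.mem_univ, true_and] at hπ
      rw [hw]
      have : ∀ m : Fin M, g (s (π m) - t m)
          = μ * Real.exp (-(μ * (s (π m) - t m))) := by
        intro m
        rw [hexp]
        rw [if_pos (by linarith [hπ m])]
      rw [Finset.prod_congr rfl (fun m _ => this m), Finset.prod_mul_distrib,
        Finset.prod_const, ← Real.exp_sum]
      congr 1
      · simp
      · congr 1
        have h1 : ∑ x : Fin M, (s (π x) - t x) = ∑ m, s m - ∑ m, t m := by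
          rw [Finset.sum_sub_distrib, Equiv.sum_comp π s]
        rw [← h1, Finset.mul_sum]
        rw [Finset.sum_neg_distrib]
    have hWNc : W = (N : ℝ) * c := by
      rw [hW, ← Finset.sum_filter_of_ne (p := fun π : Equiv.Perm (Fin M) =>
        ∀ m, t m ≤ s (π m)) (f := w)
        (fun π _ hne => by
          by_contra hnot
          exact hne (hw0 π (by simpa [hA, Finset.mem_filter] using hnot)))]
      rw [Finset.sum_congr rfl (fun π hπ => hwc π hπ), Finset.sum_const,
        nsmul_eq_mul, hN]
    have huni : ∀ π : Equiv.Perm (Fin M),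
        p π = if (∀ m, t m ≤ s (π m)) then 1 / (N : ℝ) else 0 := by
      intro π
      rw [hp]
      by_cases h : ∀ m, t m ≤ s (π m)
      · rw [if_pos h, hwc π (by simp [hA, Finset.mem_filter, h]), hWNc]
        rw [div_mul_eq_div_div_swap, div_self hcpos.ne', one_div]
      · rw [if_neg h, hw0 π (by simp [hA, Finset.mem_filter, h]), zero_div]
    refine ⟨huni, ?_⟩
    have hNne : (N : ℝ) ≠ 0 := by positivity
    have hterm : ∀ π : Equiv.Perm (Fin M),
        p π * Real.log (p π)
          = if (∀ m, t m ≤ s (π m)) then (1 / (N : ℝ)) * Real.log (1 / (N : ℝ))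
            else 0 := by
      intro π
      rw [huni π]
      split <;> simp
    rw [Finset.sum_congr rfl (fun π _ => hterm π), ← Finset.sum_filter,
      Finset.sum_const, nsmul_eq_mul, ← hA, ← hN]
    rw [one_div, Real.log_inv]
    field_simp
end

section
/- Let M ≥ 1, let t₁ ≤ t₂ ≤ ⋯ ≤ t_M be real numbers, and let s₁,…,s_M be real numbers with s_i ≥ t₁ for every i. For m = 1,…,M−1 let η_m = #{i : s_i < t_{m+1}}. Then the number of permutations π of {1,…,M} satisfying s_{π(m)} ≥ t_m for all m equals ∏_{m=1}^{M−1} (m + 1 − η_m) (an integer-valued product; it equals 0 whenever some η_m ≥ m+1). (Paper equation |Ω|_{S,t⃗} = ∏_{m=1}^{M−1}(m+1−η_m), the enumeration of admissible permutations.) -/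
open Finset

lemma nested_chain {α : Type*} (A : ℕ → Finset α) (hA : ∀ m, A (m+1) ⊆ A m) :
    ∀ m k, m ≤ k → A k ⊆ A m := by
  intro m k hmk
  induction k with
  | zero => simp [Nat.le_zero.mp hmk]
  | succ k ih =>
    rcases Nat.lt_or_ge m (k+1) with h | h
    · exact (hA k).trans (ih (Nat.lt_succ_iff.mp h))
    · have : m = k + 1 := le_antisymm hmk h
      simp [this]

lemma aux_sub1 (M m : ℕ) (h : m < M) (a : ℕ) : a - 1 - (M - 1 - m) = a - (M - m) := by omega

lemma aux_sub2 (M m : ℕ) : M + 1 - 1 - m = M - m := by omega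

lemma count_nested {α : Type*} [DecidableEq α] [Fintype α] :
    ∀ (M : ℕ) (A : ℕ → Finset α), (∀ m, A (m+1) ⊆ A m) →
    (Finset.univ.filter (fun f : Fin M → α =>
        Function.Injective f ∧ ∀ m : Fin M, f m ∈ A (m : ℕ))).card
      = ∏ m ∈ Finset.range M, ((A m).card - (M - 1 - m)) := by
  intro M
  induction M with
  | zero =>
    intro A hA
    rw [Finset.filter_true_of_mem (fun f _ => ⟨fun a => a.elim0, fun m => m.elim0⟩)]
    simp
  | succ M ih =>
    intro A hA
    have hsum :
        (univ.filter (fun f : Fin (M+1) → α =>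
            Function.Injective f ∧ ∀ m : Fin (M+1), f m ∈ A (m:ℕ))).card
          = ∑ x ∈ A M, ((univ.filter (fun f : Fin (M+1) → α =>
              Function.Injective f ∧ ∀ m : Fin (M+1), f m ∈ A (m:ℕ))).filter
                (fun f => f (Fin.last M) = x)).card := by
      refine Finset.card_eq_sum_card_fiberwise ?_
      intro f hf
      simp only [mem_coe, mem_filter, mem_univ, true_and] at hf
      simpa using hf.2 (Fin.last M)
    rw [hsum]
    have hfiber : ∀ x ∈ A M,
        ((univ.filter (fun f : Fin (M+1) → α =>
            Function.Injective f ∧ ∀ m : Fin (M+1), f m ∈ A (m:ℕ))).filter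
              (fun f => f (Fin.last M) = x)).card
          = (univ.filter (fun f : Fin M → α =>
              Function.Injective f ∧ ∀ m : Fin M, f m ∈ (A (m:ℕ)) \ {x})).card := by
      intro x hx
      refine Finset.card_bij (fun f _ => Fin.init f) ?_ ?_ ?_
      · intro f hf
        simp only [mem_filter, mem_univ, true_and] at hf ⊢
        obtain ⟨⟨hinj, hmem⟩, hlast⟩ := hf
        refine ⟨fun a b hab => ?_, fun m => ?_⟩
        · have := hinj hab
          exact Fin.castSucc_injective M this
        · simp only [Fin.init, mem_sdiff, mem_singleton]
          constructor
          · simpa using hmem m.castSucc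
          · intro h
            have : m.castSucc = Fin.last M := hinj (h.trans hlast.symm)
            exact (Fin.castSucc_lt_last m).ne this
      · intro f hf g hg hfg
        simp only [mem_filter, mem_univ, true_and] at hf hg
        have h1 : f = Fin.snoc (Fin.init f) x := by
          rw [← hf.2]; exact (Fin.snoc_init_self f).symm
        have h2 : g = Fin.snoc (Fin.init g) x := by
          rw [← hg.2]; exact (Fin.snoc_init_self g).symm
        rw [h1, h2, hfg]
      · intro f hf
        simp only [mem_filter, mem_univ, true_and] at hf
        obtain ⟨hinj, hmem⟩ := hf
        have hne : ∀ m : Fin M, f m ≠ x := fun m => by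
          have := hmem m; simp only [mem_sdiff, mem_singleton] at this; exact this.2
        refine ⟨Fin.snoc f x, ?_, by simp⟩
        simp only [mem_filter, mem_univ, true_and]
        refine ⟨⟨?_, ?_⟩, by simp⟩
        · intro a b hab
          induction a using Fin.lastCases with
          | last =>
            induction b using Fin.lastCases with
            | last => rfl
            | cast b =>
              exfalso
              rw [Fin.snoc_last, Fin.snoc_castSucc] at hab
              exact hne b hab.symm
          | cast a =>
            induction b using Fin.lastCases with
            | last =>
              exfalso
              rw [Fin.snoc_last, Fin.snoc_castSucc] at hab
              exact hne a hab
            | cast b =>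
              rw [Fin.snoc_castSucc, Fin.snoc_castSucc] at hab
              rw [hinj hab]
        · intro m
          induction m using Fin.lastCases with
          | last => simpa using hx
          | cast m =>
            rw [Fin.snoc_castSucc]
            have := hmem m
            simp only [mem_sdiff] at this
            simpa using this.1
    rw [Finset.sum_congr rfl hfiber]
    have hIH : ∀ x ∈ A M,
        (univ.filter (fun f : Fin M → α =>
            Function.Injective f ∧ ∀ m : Fin M, f m ∈ (A (m:ℕ)) \ {x})).card
          = ∏ m ∈ Finset.range M, ((A m).card - (M - m)) := by
      intro x hx
      rw [ih (fun m => A m \ {x}) (fun m => Finset.sdiff_subset_sdiff (hA m) subset_rfl)]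
      refine Finset.prod_congr rfl ?_
      intro m hm
      have hmM : m < M := mem_range.mp hm
      have hxm : x ∈ A m := nested_chain A hA m M hmM.le hx
      have hcard : (A m \ {x}).card = (A m).card - 1 := by
        rw [Finset.card_sdiff_of_subset (by simpa using hxm)]
        simp
      rw [hcard]
      exact aux_sub1 M m hmM _
    rw [Finset.sum_congr rfl hIH, Finset.sum_const, smul_eq_mul]
    rw [Finset.prod_range_succ]
    have : ∀ m ∈ Finset.range M, (A m).card - (M + 1 - 1 - m) = (A m).card - (M - m) := by
      intro m hm
      rw [aux_sub2 M m]
    rw [Finset.prod_congr rfl this]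
    simp [mul_comm]

lemma prod_toNat_cast (M : ℕ) (g : ℕ → ℤ)
    (hstep : ∀ m, m + 1 < M → g (m+1) ≤ g m + 1)
    (hlast : 0 ≤ g (M-1)) (hM : 1 ≤ M) :
    ((∏ m ∈ Finset.range M, (g m).toNat : ℕ) : ℤ) = ∏ m ∈ Finset.range M, g m := by
  by_cases h : ∀ m < M, 0 ≤ g m
  · push_cast
    exact Finset.prod_congr rfl fun m hm => Int.toNat_of_nonneg (h m (mem_range.mp hm))
  · push_neg at h
    obtain ⟨m0, hm0M, hm0⟩ := h
    set k := Nat.findGreatest (fun m => g m < 0) (M-1) with hk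
    have hm0le : m0 ≤ M - 1 := by omega
    have hPk : g k < 0 := Nat.findGreatest_spec (P := fun m => g m < 0) hm0le hm0
    have hkle : k ≤ M - 1 := Nat.findGreatest_le _
    have hkne : k ≠ M - 1 := by intro h; rw [h] at hPk; omega
    have hk1 : k + 1 ≤ M - 1 := by omega
    have hk1pos : ¬ g (k+1) < 0 :=
      Nat.findGreatest_is_greatest (P := fun m => g m < 0) (Nat.lt_succ_self k) hk1
    have hzero : g (k+1) = 0 := by
      have := hstep k (by omega)
      omega
    have hkm : k + 1 ∈ Finset.range M := mem_range.mpr (by omega)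
    rw [Finset.prod_eq_zero hkm (by simp [hzero]), Finset.prod_eq_zero hkm hzero]
    simp

lemma aux_sub3 (a b K m : ℕ) (h : m < K) (hc : a + b = K + 1) :
    (a:ℤ) - ((K - (m+1) : ℕ):ℤ) = (m:ℤ) + 2 - (b:ℤ) := by omega

lemma aux_sub4 (c d K m : ℕ) (h : m + 1 < K + 1) (hcd : c ≤ d) :
    (c:ℤ) - ((K - (m+1) : ℕ):ℤ) ≤ (d:ℤ) - ((K - m : ℕ):ℤ) + 1 := by omega

lemma aux_sub5 (K : ℕ) : ((K+1 : ℕ):ℤ) - ((K - 0 : ℕ):ℤ) = 1 := by omega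

lemma aux_sub6 (K m : ℕ) : K + 1 - 1 - m = K - m := by omega

/-- **Enumeration of admissible permutations** `|Ω|_{S,t⃗} = ∏_{m=1}^{M−1} (m+1−η_m)`.
Launch times are `t 0 ≤ t 1 ≤ ⋯ ≤ t (M−1)` (0-indexed) and the arrivals `s i`
(for `i < M`) all satisfy `s i ≥ t 0`.  With `η_m = #{i < M : s i < t (m+1)}`, the
number of permutations `π` with `s (π m) ≥ t m` for all `m` equals the (integer)
product `∏_{m=0}^{M−2} ((m+2) − η_m)`. -/
theorem admissible_permutation_count {M : ℕ} (hM : 1 ≤ M) (t s : ℕ → ℝ)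
    (hmono : ∀ i j : ℕ, i ≤ j → j < M → t i ≤ t j)
    (hs : ∀ i : ℕ, i < M → t 0 ≤ s i) :
    ((Finset.univ.filter (fun π : Equiv.Perm (Fin M) =>
        ∀ m : Fin M, t (m : ℕ) ≤ s ((π m : Fin M) : ℕ))).card : ℤ)
      = ∏ m ∈ Finset.range (M - 1),
          ((m : ℤ) + 2 - ((Finset.range M).filter (fun i => s i < t (m + 1))).card) := by
  obtain ⟨K, rfl⟩ : ∃ K, M = K + 1 := ⟨M - 1, (Nat.succ_pred_eq_of_pos hM).symm⟩
  set A : ℕ → Finset (Fin (K+1)) :=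
    fun m => Finset.univ.filter (fun i : Fin (K+1) => t (min m K) ≤ s (i:ℕ)) with hAdef
  have hA : ∀ m, A (m+1) ⊆ A m := by
    intro m i hi
    simp only [hAdef, mem_filter, mem_univ, true_and] at hi ⊢
    exact le_trans (hmono (min m K) (min (m+1) K)
      (min_le_min (Nat.le_succ m) le_rfl) (by omega)) hi
  have hperm : (Finset.univ.filter (fun π : Equiv.Perm (Fin (K+1)) =>
        ∀ m : Fin (K+1), t (m : ℕ) ≤ s ((π m : Fin (K+1)) : ℕ))).card
      = (Finset.univ.filter (fun f : Fin (K+1) → Fin (K+1) =>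
          Function.Injective f ∧ ∀ m : Fin (K+1), f m ∈ A (m:ℕ))).card := by
    refine Finset.card_bij (fun π _ => ⇑π) ?_ ?_ ?_
    · intro π hπ
      simp only [mem_filter, mem_univ, true_and] at hπ ⊢
      refine ⟨π.injective, fun m => ?_⟩
      simp only [hAdef, mem_filter, mem_univ, true_and,
        min_eq_left (Nat.lt_succ_iff.mp m.isLt)]
      exact hπ m
    · intro π hπ ρ hρ h
      exact Equiv.coe_fn_injective h
    · intro f hf
      simp only [mem_filter, mem_univ, true_and] at hf
      obtain ⟨hinj, hmem⟩ := hf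
      refine ⟨Equiv.ofBijective f ((Finite.injective_iff_bijective).mp hinj), ?_, rfl⟩
      simp only [mem_filter, mem_univ, true_and]
      intro m
      have := hmem m
      simp only [hAdef, mem_filter, mem_univ, true_and,
        min_eq_left (Nat.lt_succ_iff.mp m.isLt)] at this
      simpa [Equiv.ofBijective] using this
  have hcount := count_nested (K+1) A hA
  have hcardA : ∀ m, m ≤ K →
      (A m).card + ((Finset.range (K+1)).filter (fun i => s i < t m)).card = K + 1 := by
    intro m hm
    have h1 : (A m).card
        = ((Finset.range (K+1)).filter (fun i => ¬ s i < t m)).card := by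
      rw [hAdef]
      simp only [min_eq_left hm]
      rw [Finset.card_filter, Finset.card_filter]
      rw [Fin.sum_univ_eq_sum_range (fun i => if t m ≤ s i then 1 else 0) (K+1)]
      refine Finset.sum_congr rfl fun i _ => ?_
      simp [not_lt]
    rw [h1, add_comm]
    have := Finset.card_filter_add_card_filter_not
      (s := Finset.range (K+1)) (p := fun i => s i < t m)
    rw [this]
    simp
  set g : ℕ → ℤ := fun m => ((A m).card : ℤ) - ((K - m : ℕ) : ℤ) with hgdef
  have hstep : ∀ m, m + 1 < K + 1 → g (m+1) ≤ g m + 1 := by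
    intro m hm
    exact aux_sub4 _ _ K m hm (Finset.card_le_card (hA m))
  have hlast : 0 ≤ g ((K+1)-1) := by
    simp only [hgdef, Nat.add_sub_cancel, Nat.sub_self]
    simp
  have hcast := prod_toNat_cast (K+1) g hstep hlast (Nat.le_add_left 1 K)
  have hterm : ∀ m ∈ Finset.range (K+1),
      (A m).card - (K + 1 - 1 - m) = (g m).toNat := by
    intro m _
    rw [hgdef, aux_sub6 K m]
    exact (Int.toNat_sub _ _).symm
  rw [hperm, hcount, Finset.prod_congr rfl hterm]
  rw [hcast, Finset.prod_range_succ' g K]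
  have hg0 : g 0 = 1 := by
    have hA0 : A 0 = Finset.univ := by
      rw [hAdef]
      refine Finset.filter_true_of_mem fun i _ => ?_
      simpa using hs i i.isLt
    rw [hgdef]
    dsimp only
    rw [hA0, Finset.card_univ, Fintype.card_fin]
    exact aux_sub5 K
  rw [hg0, mul_one]
  simp only [Nat.add_sub_cancel]
  refine Finset.prod_congr rfl fun m hm => ?_
  have hmK : m < K := mem_range.mp hm
  rw [hgdef]
  exact aux_sub3 _ _ K m hmK (hcardA (m+1) hmK)
end

section
/- Let μ > 0 and τ > 0. Let T be a random variable taking values in [0,τ], and let D be independent of T with exponential density g(d) = μe^{−μd} for d ≥ 0. Then S = T + D has a density f_S, its differential entropy satisfies h(S) = −∫ f_S log f_S ≤ log((e + μτ)/μ), and the supremum of h(T + D) over all probability laws of T on [0,τ] equals log((e + μτ)/μ). (Paper Theorem 'Maximum h(S) for exponential first passage under a deadline constraint'.) -/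
open MeasureTheory

/-- The exponential law with rate `μ`, as a measure on `ℝ`. -/
noncomputable def expLaw (μ : ℝ) : Measure ℝ :=
  volume.withDensity (fun x => ENNReal.ofReal (if 0 ≤ x then μ * Real.exp (-(μ * x)) else 0))

section MaxEntDev
open MeasureTheory Real Set Filter Topology
open scoped ENNReal

namespace MaxEnt

lemma expLaw_eq (μ : ℝ) : expLaw μ = ProbabilityTheory.expMeasure μ := by
  rw [expLaw, ProbabilityTheory.expMeasure, ProbabilityTheory.gammaMeasure]
  congr 1
  funext x
  rw [← ProbabilityTheory.exponentialPDF_eq]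
  rfl

lemma isProb_expLaw {μ : ℝ} (hμ : 0 < μ) : IsProbabilityMeasure (expLaw μ) := by
  rw [expLaw_eq]; exact ProbabilityTheory.isProbabilityMeasure_expMeasure hμ

noncomputable def eg (μ x : ℝ) : ℝ := if 0 ≤ x then μ * Real.exp (-(μ * x)) else 0

lemma eg_meas (μ : ℝ) : Measurable (eg μ) := by
  unfold eg
  exact Measurable.ite measurableSet_Ici (by fun_prop) measurable_const

noncomputable def fconv (μ : ℝ) (ν : Measure ℝ) (s : ℝ) : ℝ := ∫ t, eg μ (s - t) ∂ν

lemma fconv_meas (μ : ℝ) (ν : Measure ℝ) [SFinite ν] : Measurable (fconv μ ν) := by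
  have h : StronglyMeasurable (fun p : ℝ × ℝ => eg μ (p.1 - p.2)) :=
    ((eg_meas μ).comp (measurable_fst.sub measurable_snd)).stronglyMeasurable
  exact h.integral_prod_right'.measurable

lemma eg_nonneg {μ : ℝ} (hμ : 0 < μ) (x : ℝ) : 0 ≤ eg μ x := by
  unfold eg; split
  · positivity
  · exact le_rfl

lemma eg_le {μ : ℝ} (hμ : 0 < μ) (x : ℝ) : eg μ x ≤ μ := by
  unfold eg; split
  · nlinarith [Real.exp_le_one_iff.mpr (by nlinarith : -(μ * x) ≤ 0), Real.exp_pos (-(μ*x))]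
  · exact hμ.le

lemma eg_integrable {μ : ℝ} (hμ : 0 < μ) (ν : Measure ℝ) [IsProbabilityMeasure ν] (s : ℝ) :
    Integrable (fun t => eg μ (s - t)) ν := by
  refine Integrable.mono' (integrable_const μ)
    (((eg_meas μ).comp (measurable_const.sub measurable_id)).aestronglyMeasurable) ?_
  filter_upwards with t
  rw [Real.norm_eq_abs, abs_of_nonneg (eg_nonneg hμ _)]
  exact eg_le hμ _

lemma fconv_nonneg {μ : ℝ} (hμ : 0 < μ) (ν : Measure ℝ) (s : ℝ) : 0 ≤ fconv μ ν s :=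
  integral_nonneg (fun t => eg_nonneg hμ _)

lemma fconv_le {μ : ℝ} (hμ : 0 < μ) (ν : Measure ℝ) [IsProbabilityMeasure ν] (s : ℝ) :
    fconv μ ν s ≤ μ := by
  calc fconv μ ν s ≤ ∫ _, μ ∂ν :=
        integral_mono (eg_integrable hμ ν s) (integrable_const μ) (fun t => eg_le hμ _)
    _ = μ := by simp

/-- the law of the sum is absolutely continuous with density fconv -/
lemma conv_law {μ : ℝ} (hμ : 0 < μ) (ν : Measure ℝ) [IsProbabilityMeasure ν] :
    Measure.map (fun q : ℝ × ℝ => q.1 + q.2) (ν.prod (expLaw μ))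
      = volume.withDensity (fun x => ENNReal.ofReal (fconv μ ν x)) := by
  haveI := isProb_expLaw hμ
  ext A hA
  rw [Measure.map_apply (by fun_prop : Measurable (fun q : ℝ × ℝ => q.1 + q.2)) hA, withDensity_apply _ hA]
  have hegm : Measurable (fun x => ENNReal.ofReal (eg μ x)) :=
    ENNReal.measurable_ofReal.comp (eg_meas μ)
  have h1 : ∀ t : ℝ, expLaw μ {d : ℝ | t + d ∈ A}
      = ∫⁻ s, (A.indicator (fun _ => (1:ℝ≥0∞)) s) * ENNReal.ofReal (eg μ (s - t)) := by
    intro t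
    have hm : MeasurableSet {d : ℝ | t + d ∈ A} := (measurable_const_add t) hA
    rw [expLaw, withDensity_apply _ hm]
    have : ∫⁻ d in {d : ℝ | t + d ∈ A}, ENNReal.ofReal (if 0 ≤ d then μ * Real.exp (-(μ * d)) else 0)
        = ∫⁻ d, (A.indicator (fun _ => (1:ℝ≥0∞)) (t + d)) * ENNReal.ofReal (eg μ d) := by
      rw [← lintegral_indicator hm]
      congr 1
      funext d
      by_cases hd : t + d ∈ A
      · simp [Set.indicator_of_mem, hd, Set.indicator_of_mem (show d ∈ {d : ℝ | t + d ∈ A} from hd), eg]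
      · simp [Set.indicator_of_notMem, hd, Set.indicator_of_notMem (show d ∉ {d : ℝ | t + d ∈ A} from hd)]
    rw [this]
    calc ∫⁻ d, (A.indicator (fun _ => (1:ℝ≥0∞)) (t + d)) * ENNReal.ofReal (eg μ d)
        = ∫⁻ d, (A.indicator (fun _ => (1:ℝ≥0∞)) (t + d)) * ENNReal.ofReal (eg μ ((t + d) - t)) := by
          congr 1; funext d; rw [add_sub_cancel_left]
      _ = ∫⁻ s, (A.indicator (fun _ => (1:ℝ≥0∞)) s) * ENNReal.ofReal (eg μ (s - t)) :=
          lintegral_add_left_eq_self (fun s => (A.indicator (fun _ => (1:ℝ≥0∞)) s) * ENNReal.ofReal (eg μ (s - t))) t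
  have hprod : (ν.prod (expLaw μ)) ((fun q : ℝ × ℝ => q.1 + q.2) ⁻¹' A)
      = ∫⁻ t, expLaw μ {d : ℝ | t + d ∈ A} ∂ν := by
    rw [Measure.prod_apply ((by fun_prop : Measurable (fun q : ℝ × ℝ => q.1 + q.2)) hA)]
    rfl
  rw [hprod]
  simp_rw [h1]
  rw [lintegral_lintegral_swap]
  · have h2 : ∀ s : ℝ, ∫⁻ t, (A.indicator (fun _ => (1:ℝ≥0∞)) s) * ENNReal.ofReal (eg μ (s - t)) ∂ν
        = A.indicator (fun _ => (1:ℝ≥0∞)) s * ENNReal.ofReal (fconv μ ν s) := by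
      intro s
      have hm2 : Measurable fun t : ℝ => ENNReal.ofReal (eg μ (s - t)) :=
        ENNReal.measurable_ofReal.comp ((eg_meas μ).comp (measurable_const.sub measurable_id))
      rw [lintegral_const_mul _ hm2]
      congr 1
      rw [← ofReal_integral_eq_lintegral_ofReal (eg_integrable hμ ν s)
        (Filter.Eventually.of_forall (fun t => eg_nonneg hμ _))]
      rfl
    simp_rw [h2]
    rw [← lintegral_indicator hA]
    congr 1
    funext s
    by_cases hs : s ∈ A <;> simp [hs]
  · apply AEMeasurable.mul
    · exact ((measurable_indicator_const_iff 1).mpr hA).comp measurable_snd |>.aemeasurable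
    · exact (hegm.comp (measurable_snd.sub measurable_fst)).aemeasurable

end MaxEnt
section CS
open MeasureTheory Real Set Filter Topology
open scoped ENNReal

lemma tendsto_sub_atTop (τ : ℝ) : Tendsto (fun s : ℝ => s - τ) atTop atTop := by
  simpa [sub_eq_add_neg] using tendsto_atTop_add_const_right atTop (-τ) (tendsto_id (α := ℝ))

lemma tendsto_exp_term {μ : ℝ} (hμ : 0 < μ) (τ : ℝ) :
    Tendsto (fun s : ℝ => Real.exp (-(μ * (s - τ)))) atTop (𝓝 0) := by
  have h3 : Tendsto (fun s : ℝ => -(μ * (s - τ))) atTop atBot := by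
    simpa [neg_mul] using (tendsto_sub_atTop τ).const_mul_atTop_of_neg (neg_neg_iff_pos.mpr hμ)
  exact Real.tendsto_exp_atBot.comp h3

lemma tendsto_mul_exp_term {μ : ℝ} (hμ : 0 < μ) (τ : ℝ) :
    Tendsto (fun s : ℝ => (s - τ) * Real.exp (-(μ * (s - τ)))) atTop (𝓝 0) := by
  have h0 : Tendsto (fun x : ℝ => x * Real.exp (-(μ * x))) atTop (𝓝 0) := by
    have := tendsto_rpow_mul_exp_neg_mul_atTop_nhds_zero 1 μ hμ
    apply this.congr'
    filter_upwards [eventually_ge_atTop (0:ℝ)] with x hx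
    rw [Real.rpow_one, neg_mul]
  exact h0.comp (tendsto_sub_atTop τ)

lemma E1 {μ : ℝ} (hμ : 0 < μ) (τ : ℝ) :
    IntegrableOn (fun s => Real.exp (-(μ * (s - τ)))) (Ioi τ) ∧
      ∫ s in Ioi τ, Real.exp (-(μ * (s - τ))) = 1 / μ := by
  have hderiv : ∀ s : ℝ, s ∈ Ici τ →
      HasDerivAt (fun s => -(1/μ) * Real.exp (-(μ * (s - τ)))) (Real.exp (-(μ * (s - τ)))) s := by
    intro s _
    have h1 : HasDerivAt (fun s : ℝ => -(μ * (s - τ))) (-μ) s := by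
      simpa using (((hasDerivAt_id s).sub_const τ).const_mul (-μ)).congr_deriv (by ring)
    have h2 := (h1.exp).const_mul (-(1/μ))
    refine h2.congr_deriv ?_
    field_simp [hμ.ne']
  have hpos : ∀ s ∈ Ioi τ, (0:ℝ) ≤ Real.exp (-(μ * (s - τ))) := fun s _ => (Real.exp_pos _).le
  have htend : Tendsto (fun s => -(1/μ) * Real.exp (-(μ * (s - τ)))) atTop (𝓝 0) := by
    simpa using (tendsto_exp_term hμ τ).const_mul (-(1/μ))
  refine ⟨integrableOn_Ioi_deriv_of_nonneg' hderiv hpos htend, ?_⟩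
  rw [integral_Ioi_of_hasDerivAt_of_nonneg' hderiv hpos htend]
  simp

lemma E2 {μ : ℝ} (hμ : 0 < μ) (τ : ℝ) :
    IntegrableOn (fun s => (s - τ) * Real.exp (-(μ * (s - τ)))) (Ioi τ) ∧
      ∫ s in Ioi τ, (s - τ) * Real.exp (-(μ * (s - τ))) = 1 / μ^2 := by
  have hderiv : ∀ s : ℝ, s ∈ Ici τ →
      HasDerivAt (fun s => (-(s - τ)/μ - 1/μ^2) * Real.exp (-(μ * (s - τ))))
        ((s - τ) * Real.exp (-(μ * (s - τ)))) s := by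
    intro s _
    have h1 : HasDerivAt (fun s : ℝ => -(μ * (s - τ))) (-μ) s := by
      simpa using (((hasDerivAt_id s).sub_const τ).const_mul (-μ)).congr_deriv (by ring)
    have hu : HasDerivAt (fun s : ℝ => -(s - τ)/μ - 1/μ^2) (-(1/μ)) s := by
      have base := (((hasDerivAt_id s).sub_const τ).const_mul (-(1/μ))).sub_const (1/μ^2)
      have base2 := base.congr_deriv (by ring : -(1/μ) * 1 = -(1/μ))
      apply base2.congr_of_eventuallyEq
      filter_upwards with x
      simp only [id_eq]
      ring
    have h2 := hu.mul h1.exp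
    apply h2.congr_deriv
    field_simp
    ring
  have hpos : ∀ s ∈ Ioi τ, (0:ℝ) ≤ (s - τ) * Real.exp (-(μ * (s - τ))) := by
    intro s hs
    have : (0:ℝ) ≤ s - τ := by simp at hs; linarith
    positivity
  have htend : Tendsto (fun s => (-(s - τ)/μ - 1/μ^2) * Real.exp (-(μ * (s - τ)))) atTop (𝓝 0) := by
    have := ((tendsto_mul_exp_term hμ τ).const_mul (-(1/μ))).add
      ((tendsto_exp_term hμ τ).const_mul (-(1/μ^2)))
    simp only [mul_zero, add_zero] at this
    apply this.congr
    intro s; ring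
  refine ⟨integrableOn_Ioi_deriv_of_nonneg' hderiv hpos htend, ?_⟩
  rw [integral_Ioi_of_hasDerivAt_of_nonneg' hderiv hpos htend]
  field_simp
  simp

lemma tail_integral {μ : ℝ} (hμ : 0 < μ) (τ A B : ℝ) :
    IntegrableOn (fun s => (A + B * (s - τ)) * Real.exp (-(μ * (s - τ)))) (Ioi τ) ∧
      ∫ s in Ioi τ, (A + B * (s - τ)) * Real.exp (-(μ * (s - τ))) = A / μ + B / μ^2 := by
  obtain ⟨i1, v1⟩ := E1 hμ τ
  obtain ⟨i2, v2⟩ := E2 hμ τ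
  have hi : IntegrableOn (fun s => A * Real.exp (-(μ * (s - τ))) + B * ((s - τ) * Real.exp (-(μ * (s - τ))))) (Ioi τ) :=
    (i1.const_mul A).add (i2.const_mul B)
  have heq : ∀ s : ℝ, (A + B * (s - τ)) * Real.exp (-(μ * (s - τ)))
      = A * Real.exp (-(μ * (s - τ))) + B * ((s - τ) * Real.exp (-(μ * (s - τ)))) := by
    intro s; ring
  constructor
  · exact hi.congr_fun (fun s _ => (heq s).symm) measurableSet_Ioi
  · rw [show (fun s => (A + B * (s - τ)) * Real.exp (-(μ * (s - τ)))) = fun s => A * Real.exp (-(μ * (s - τ))) + B * ((s - τ) * Real.exp (-(μ * (s - τ)))) from funext heq]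
    rw [integral_add (i1.const_mul A) (i2.const_mul B), MeasureTheory.integral_const_mul, MeasureTheory.integral_const_mul, v1, v2]
    ring

/-- splitting an integral over ℝ for a function vanishing on negatives -/
lemma split_integral {τ : ℝ} (hτ : 0 < τ) (F : ℝ → ℝ)
    (h0 : ∀ s, s < 0 → F s = 0)
    (h1 : IntegrableOn F (Icc 0 τ)) (h2 : IntegrableOn F (Ioi τ)) :
    Integrable F ∧ ∫ s, F s = (∫ s in Icc 0 τ, F s) + ∫ s in Ioi τ, F s := by
  have hfun : F = (Icc 0 τ).indicator F + (Ioi τ).indicator F := by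
    funext s
    by_cases hs : s < 0
    · simp [indicator_apply, (by simp; intro h; linarith : s ∉ Icc 0 τ),
        (by simp; linarith : ¬ τ < s), h0 s hs]
    · push_neg at hs
      by_cases hs2 : s ≤ τ
      · simp [indicator_apply, hs, hs2, (by simp; linarith : ¬ τ < s)]
      · push_neg at hs2
        simp [indicator_apply, hs2, (by simp; intro h; linarith : s ∉ Icc 0 τ)]
  have i1 : Integrable ((Icc 0 τ).indicator F) := (integrable_indicator_iff measurableSet_Icc).mpr h1
  have i2 : Integrable ((Ioi τ).indicator F) := (integrable_indicator_iff measurableSet_Ioi).mpr h2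
  constructor
  · rw [hfun]; exact i1.add i2
  · have : ∫ s, F s = ∫ s, ((Icc 0 τ).indicator F s + (Ioi τ).indicator F s) := by
      refine integral_congr_ae (Filter.Eventually.of_forall fun s => ?_)
      nth_rewrite 1 [hfun]; rfl
    rw [this, integral_add i1 i2, integral_indicator measurableSet_Icc, integral_indicator measurableSet_Ioi]

/-- bound for x log x on [0, M] -/
lemma xlogx_bound {M x : ℝ} (hM : 0 < M) (hx : 0 ≤ x) (hxM : x ≤ M) :
    |x * Real.log x| ≤ max 1 M * (1 + |Real.log M|) + 1 := by
  rcases eq_or_lt_of_le hx with h0 | hx0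
  · simp [← h0]
    positivity
  by_cases h1 : x ≤ 1
  · have : |x * Real.log x| = x * (-Real.log x) := by
      rw [abs_of_nonpos (mul_nonpos_iff.mpr (Or.inl ⟨hx, (Real.log_nonpos hx h1)⟩))]
      ring
    rw [this]
    have hlog : -Real.log x = Real.log x⁻¹ := (Real.log_inv x).symm
    have : x * (-Real.log x) ≤ x * (x⁻¹ - 1) := by
      apply mul_le_mul_of_nonneg_left _ hx
      rw [hlog]
      exact Real.log_le_sub_one_of_pos (by positivity)
    calc x * (-Real.log x) ≤ x * (x⁻¹ - 1) := this
      _ = 1 - x := by field_simp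
      _ ≤ 1 := by linarith
      _ ≤ max 1 M * (1 + |Real.log M|) + 1 := by
          have : (0:ℝ) ≤ max 1 M * (1 + |Real.log M|) := by positivity
          linarith
  · push_neg at h1
    have hlogpos : 0 ≤ Real.log x := Real.log_nonneg h1.le
    have hM1 : (1:ℝ) ≤ M := le_trans h1.le hxM
    rw [abs_of_nonneg (by positivity)]
    have hxlM : Real.log x ≤ Real.log M := Real.log_le_log hx0 hxM
    calc x * Real.log x ≤ M * Real.log M := by
          apply mul_le_mul hxM hxlM hlogpos (by linarith)
      _ ≤ max 1 M * (1 + |Real.log M|) := by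
          have h2 : Real.log M ≤ 1 + |Real.log M| := by
            cases abs_cases (Real.log M) with
            | inl h => linarith [h.1]
            | inr h => linarith [h.1, Real.log_nonneg hM1]
          apply mul_le_mul (le_max_right 1 M) h2 (Real.log_nonneg hM1) (by positivity)
      _ ≤ max 1 M * (1 + |Real.log M|) + 1 := by linarith

end CS

noncomputable def qf (μ τ : ℝ) (s : ℝ) : ℝ :=
  if s < 0 then 0 else if s ≤ τ then μ / (Real.exp 1 + μ * τ)
  else Real.exp 1 * (μ / (Real.exp 1 + μ * τ)) * Real.exp (-(μ * (s - τ)))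

namespace MaxEnt

variable {μ τ : ℝ}

lemma denom_pos (hμ : 0 < μ) (hτ : 0 < τ) : 0 < Real.exp 1 + μ * τ := by
  have := Real.exp_pos 1; nlinarith

lemma aa_pos (hμ : 0 < μ) (hτ : 0 < τ) : 0 < μ / (Real.exp 1 + μ * τ) :=
  div_pos hμ (denom_pos hμ hτ)

lemma qf_meas (μ τ : ℝ) : Measurable (qf μ τ) := by
  unfold qf
  refine Measurable.ite measurableSet_Iio measurable_const ?_
  refine Measurable.ite (measurableSet_Iic) measurable_const ?_
  fun_prop

lemma qf_nonneg (hμ : 0 < μ) (hτ : 0 < τ) (s : ℝ) : 0 ≤ qf μ τ s := by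
  unfold qf
  have h := denom_pos hμ hτ
  split
  · exact le_rfl
  · split
    · positivity
    · positivity

lemma qf_pos (hμ : 0 < μ) (hτ : 0 < τ) {s : ℝ} (hs : 0 ≤ s) : 0 < qf μ τ s := by
  unfold qf
  have h := denom_pos hμ hτ
  rw [if_neg (not_lt.mpr hs)]
  split
  · positivity
  · positivity

lemma qf_zero_of_neg {s : ℝ} (hs : s < 0) : qf μ τ s = 0 := by
  unfold qf; rw [if_pos hs]

lemma qf_Icc {s : ℝ} (hs : s ∈ Icc 0 τ) : qf μ τ s = μ / (Real.exp 1 + μ * τ) := by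
  unfold qf; rw [if_neg (not_lt.mpr hs.1), if_pos hs.2]

lemma qf_Ioi {s : ℝ} (h0 : 0 ≤ τ) (hs : s ∈ Ioi τ) :
    qf μ τ s = Real.exp 1 * (μ / (Real.exp 1 + μ * τ)) * Real.exp (-(μ * (s - τ))) := by
  have : τ < s := hs
  unfold qf; rw [if_neg (by push_neg; linarith), if_neg (by push_neg; linarith)]

/-- generic: set integral over Icc of an a.e.-constant-like function -/
lemma setIntegral_Icc_const (τ c : ℝ) (F : ℝ → ℝ) (h : ∀ s ∈ Icc (0:ℝ) τ, F s = c) (h0 : 0 ≤ τ) :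
    IntegrableOn F (Icc 0 τ) ∧ ∫ s in Icc 0 τ, F s = τ * c := by
  have h1 : ∫ s in Icc 0 τ, F s = ∫ _ in Icc (0:ℝ) τ, c := setIntegral_congr_fun measurableSet_Icc h
  constructor
  · exact (integrableOn_const (C := c) measure_Icc_lt_top.ne).congr_fun
      (fun s hs => (h s hs).symm) measurableSet_Icc
  · rw [h1, setIntegral_const, Real.volume_real_Icc, smul_eq_mul, max_eq_left (by linarith)]
    ring_nf

/-- generic tail evaluation -/
lemma setIntegral_Ioi_eval (hμ : 0 < μ) (τ A B : ℝ) (F : ℝ → ℝ)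
    (h : ∀ s ∈ Ioi τ, F s = (A + B * (s - τ)) * Real.exp (-(μ * (s - τ)))) :
    IntegrableOn F (Ioi τ) ∧ ∫ s in Ioi τ, F s = A / μ + B / μ^2 := by
  obtain ⟨hi, hv⟩ := tail_integral hμ τ A B
  constructor
  · exact hi.congr_fun (fun s hs => (h s hs).symm) measurableSet_Ioi
  · rw [setIntegral_congr_fun measurableSet_Ioi h, hv]

lemma qf_integral (hμ : 0 < μ) (hτ : 0 < τ) :
    Integrable (qf μ τ) ∧ ∫ s, qf μ τ s = 1 := by
  set aa := μ / (Real.exp 1 + μ * τ) with haa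
  obtain ⟨i1, v1⟩ := setIntegral_Icc_const τ aa (qf μ τ) (fun s hs => qf_Icc hs) hτ.le
  obtain ⟨i2, v2⟩ := setIntegral_Ioi_eval hμ τ (Real.exp 1 * aa) 0 (qf μ τ)
    (fun s hs => by rw [qf_Ioi hτ.le hs]; ring)
  obtain ⟨hint, hval⟩ := split_integral hτ (qf μ τ) (fun s hs => qf_zero_of_neg hs) i1 i2
  refine ⟨hint, ?_⟩
  rw [hval, v1, v2]
  have hd := denom_pos hμ hτ
  rw [haa]
  field_simp
  ring
end MaxEnt
section FSection
open MeasureTheory Real Set Filter Topology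
open scoped ENNReal
namespace MaxEnt

variable {μ τ : ℝ}

lemma ae_supp (ν : Measure ℝ) (hsupp : ν (Set.Icc 0 τ)ᶜ = 0) : ∀ᵐ t ∂ν, t ∈ Icc 0 τ := by
  rw [ae_iff, ← Set.compl_def]
  exact hsupp

lemma fconv_zero_of_neg (hμ : 0 < μ) {ν : Measure ℝ} (hsupp : ν (Set.Icc 0 τ)ᶜ = 0)
    {s : ℝ} (hs : s < 0) : fconv μ ν s = 0 := by
  have h : (fun t => eg μ (s - t)) =ᵐ[ν] (fun _ => (0:ℝ)) := by
    filter_upwards [ae_supp ν hsupp] with t ht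
    unfold eg
    rw [if_neg (by push_neg; linarith [ht.1])]
  rw [fconv, integral_congr_ae h, integral_const]
  simp

lemma fconv_tail (hμ : 0 < μ) {ν : Measure ℝ} (hsupp : ν (Set.Icc 0 τ)ᶜ = 0)
    {s : ℝ} (hs : τ ≤ s) : fconv μ ν s = Real.exp (-(μ * (s - τ))) * fconv μ ν τ := by
  have h : (fun t => eg μ (s - t)) =ᵐ[ν] (fun t => Real.exp (-(μ * (s - τ))) * eg μ (τ - t)) := by
    filter_upwards [ae_supp ν hsupp] with t ht
    unfold eg
    rw [if_pos (by linarith [ht.2] : (0:ℝ) ≤ s - t), if_pos (by linarith [ht.2] : (0:ℝ) ≤ τ - t)]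
    rw [show -(μ * (s - t)) = -(μ * (s - τ)) + -(μ * (τ - t)) by ring, Real.exp_add]
    ring
  rw [fconv, integral_congr_ae h, MeasureTheory.integral_const_mul]
  rfl

lemma lintegral_fconv (hμ : 0 < μ) (ν : Measure ℝ) [IsProbabilityMeasure ν] :
    ∫⁻ s, ENNReal.ofReal (fconv μ ν s) = 1 := by
  haveI := isProb_expLaw hμ
  have h := conv_law hμ ν
  have h2 := congrArg (fun m : Measure ℝ => m Set.univ) h
  rw [Measure.map_apply (by fun_prop : Measurable (fun q : ℝ × ℝ => q.1 + q.2)) MeasurableSet.univ,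
    Set.preimage_univ, measure_univ, withDensity_apply _ MeasurableSet.univ,
    setLIntegral_univ] at h2
  exact h2.symm

lemma integrable_fconv (hμ : 0 < μ) (ν : Measure ℝ) [IsProbabilityMeasure ν] :
    Integrable (fconv μ ν) := by
  refine ⟨(fconv_meas μ ν).aestronglyMeasurable, ?_⟩
  rw [hasFiniteIntegral_iff_ofReal (Filter.Eventually.of_forall (fconv_nonneg hμ ν)),
    lintegral_fconv hμ ν]
  exact ENNReal.one_lt_top

lemma integral_fconv (hμ : 0 < μ) (ν : Measure ℝ) [IsProbabilityMeasure ν] :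
    ∫ s, fconv μ ν s = 1 := by
  rw [integral_eq_lintegral_of_nonneg_ae (Filter.Eventually.of_forall (fconv_nonneg hμ ν))
    (fconv_meas μ ν).aestronglyMeasurable, lintegral_fconv hμ ν]
  simp

/-- Key entropy bound via the Gibbs inequality against qf. -/
lemma entropy_core (hμ : 0 < μ) (hτ : 0 < τ) (ν : Measure ℝ) [IsProbabilityMeasure ν]
    (hsupp : ν (Set.Icc 0 τ)ᶜ = 0) :
    Integrable (fun s => fconv μ ν s * Real.log (fconv μ ν s)) ∧
      Real.log (μ / (Real.exp 1 + μ * τ)) ≤ ∫ s, fconv μ ν s * Real.log (fconv μ ν s) := by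
  set aa := μ / (Real.exp 1 + μ * τ) with haa
  have haapos : 0 < aa := aa_pos hμ hτ
  set c := fconv μ ν τ with hc
  have hc0 : 0 ≤ c := fconv_nonneg hμ ν τ
  have hcμ : c ≤ μ := fconv_le hμ ν τ
  set F1 := fun s => fconv μ ν s * Real.log (fconv μ ν s) with hF1
  set F2 := fun s => fconv μ ν s * Real.log (qf μ τ s) with hF2
  -- tail representation of fconv
  have htail : ∀ s ∈ Ioi τ, fconv μ ν s = c * Real.exp (-(μ * (s - τ))) := by
    intro s hs
    rw [fconv_tail hμ hsupp (le_of_lt hs)]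
    ring
  -- F1 pieces
  have hF1neg : ∀ s, s < 0 → F1 s = 0 := by
    intro s hs; rw [hF1]; simp only; rw [fconv_zero_of_neg hμ hsupp hs]; simp
  have hF1Icc : IntegrableOn F1 (Icc 0 τ) := by
    refine Measure.integrableOn_of_bounded (M := max 1 μ * (1 + |Real.log μ|) + 1)
      (by rw [Real.volume_Icc]; exact ENNReal.ofReal_ne_top) ?_ ?_
    · exact ((fconv_meas μ ν).mul (Real.measurable_log.comp (fconv_meas μ ν))).aestronglyMeasurable
    · filter_upwards with s
      rw [Real.norm_eq_abs]
      exact xlogx_bound hμ (fconv_nonneg hμ ν s) (fconv_le hμ ν s)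
  have hF1tail : ∀ s ∈ Ioi τ, F1 s =
      (c * Real.log c + (-(c * μ)) * (s - τ)) * Real.exp (-(μ * (s - τ))) := by
    intro s hs
    rw [hF1]; simp only
    rw [htail s hs]
    rcases eq_or_lt_of_le hc0 with h0 | hcp
    · rw [← h0]; simp
    · rw [Real.log_mul (ne_of_gt hcp) (ne_of_gt (Real.exp_pos _)), Real.log_exp]
      ring
  obtain ⟨hF1Ioi, hF1Ioiv⟩ := setIntegral_Ioi_eval hμ τ (c * Real.log c) (-(c * μ)) F1 hF1tail
  obtain ⟨hF1int, hF1val⟩ := split_integral hτ F1 hF1neg hF1Icc hF1Ioi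
  -- fconv pieces : Icc integral value
  have hfneg : ∀ s, s < 0 → fconv μ ν s = 0 := fun s hs => fconv_zero_of_neg hμ hsupp hs
  have hftail : ∀ s ∈ Ioi τ, fconv μ ν s = (c + 0 * (s - τ)) * Real.exp (-(μ * (s - τ))) := by
    intro s hs; rw [htail s hs]; ring
  obtain ⟨hfIoi, hfIoiv⟩ := setIntegral_Ioi_eval hμ τ c 0 (fconv μ ν) hftail
  have hfIcc : IntegrableOn (fconv μ ν) (Icc 0 τ) := (integrable_fconv hμ ν).integrableOn
  obtain ⟨hfint, hfval⟩ := split_integral hτ (fconv μ ν) hfneg hfIcc hfIoi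
  rw [integral_fconv hμ ν] at hfval
  have hIccf : ∫ s in Icc 0 τ, fconv μ ν s = 1 - c / μ := by
    rw [hfIoiv] at hfval
    have : (0:ℝ) / μ ^ 2 = 0 := by simp
    rw [this, add_zero] at hfval
    linarith
  -- F2 pieces
  have hqpos : ∀ s : ℝ, 0 ≤ s → 0 < qf μ τ s := fun s hs => qf_pos hμ hτ hs
  have hF2neg : ∀ s, s < 0 → F2 s = 0 := by
    intro s hs; rw [hF2]; simp only; rw [fconv_zero_of_neg hμ hsupp hs]; simp
  have hF2Icceq : EqOn F2 (fun s => fconv μ ν s * Real.log aa) (Icc 0 τ) := by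
    intro s hs; rw [hF2]; simp only; rw [qf_Icc hs]
  have hF2Icc : IntegrableOn F2 (Icc 0 τ) := by
    have hbase : IntegrableOn (fun s => fconv μ ν s * Real.log aa) (Icc 0 τ) :=
      hfIcc.mul_const (Real.log aa)
    exact hbase.congr_fun (fun s hs => (hF2Icceq hs).symm) measurableSet_Icc
  have hF2Iccv : ∫ s in Icc 0 τ, F2 s = (1 - c / μ) * Real.log aa := by
    rw [setIntegral_congr_fun measurableSet_Icc hF2Icceq]
    rw [integral_mul_const, hIccf]
  have hEaa : Real.log (Real.exp 1 * aa) = 1 + Real.log aa := by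
    rw [Real.log_mul (ne_of_gt (Real.exp_pos 1)) (ne_of_gt haapos), Real.log_exp]
  have hF2tail : ∀ s ∈ Ioi τ, F2 s =
      (c * (1 + Real.log aa) + (-(c * μ)) * (s - τ)) * Real.exp (-(μ * (s - τ))) := by
    intro s hs
    rw [hF2]; simp only
    rw [htail s hs, qf_Ioi hτ.le hs,
      Real.log_mul (by positivity) (ne_of_gt (Real.exp_pos _)), Real.log_exp, hEaa]
    ring
  obtain ⟨hF2Ioi, hF2Ioiv⟩ := setIntegral_Ioi_eval hμ τ (c * (1 + Real.log aa)) (-(c * μ)) F2 hF2tail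
  obtain ⟨hF2int, hF2val⟩ := split_integral hτ F2 hF2neg hF2Icc hF2Ioi
  have hF2total : ∫ s, F2 s = Real.log aa := by
    rw [hF2val, hF2Iccv, hF2Ioiv]
    have hμ' : μ ≠ 0 := ne_of_gt hμ
    field_simp
    ring
  -- qf integral
  obtain ⟨hqint, hqval⟩ := qf_integral hμ hτ
  -- pointwise Gibbs
  have hgibbs : ∀ s, fconv μ ν s - qf μ τ s ≤ F1 s - F2 s := by
    intro s
    by_cases hs : s < 0
    · simp [hF1neg s hs, hF2neg s hs, hfneg s hs, qf_zero_of_neg hs]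
    · push_neg at hs
      have hq := hqpos s hs
      rcases eq_or_lt_of_le (fconv_nonneg hμ ν s) with h0 | hfp
      · rw [hF1, hF2]; simp only; rw [← h0]; simpa using hq.le
      · have hlog := Real.log_le_sub_one_of_pos (div_pos hq hfp)
        rw [Real.log_div (ne_of_gt hq) (ne_of_gt hfp)] at hlog
        have h2 := mul_le_mul_of_nonneg_left hlog (le_of_lt hfp)
        have hdiv : fconv μ ν s * (qf μ τ s / fconv μ ν s - 1) = qf μ τ s - fconv μ ν s := by
          field_simp
        rw [hF1, hF2]; simp only
        nlinarith [h2, hdiv]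
  -- integrate
  have hmono : ∫ s, (fconv μ ν s - qf μ τ s) ≤ ∫ s, (F1 s - F2 s) :=
    integral_mono ((integrable_fconv hμ ν).sub hqint) (hF1int.sub hF2int) hgibbs
  rw [integral_sub (integrable_fconv hμ ν) hqint, integral_sub hF1int hF2int,
    integral_fconv hμ ν, hqval, hF2total] at hmono
  refine ⟨hF1int, by linarith⟩

end MaxEnt
end FSection

section GSection
open MeasureTheory Real Set Filter Topology
open scoped ENNReal
namespace MaxEnt

variable {μ τ : ℝ}

lemma log_flip : Real.log ((Real.exp 1 + μ * τ) / μ) = - Real.log (μ / (Real.exp 1 + μ * τ)) := by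
  rw [← Real.log_inv, inv_div]

/-- entropy integral of qf -/
lemma qf_entropy (hμ : 0 < μ) (hτ : 0 < τ) :
    Integrable (fun s => qf μ τ s * Real.log (qf μ τ s)) ∧
      ∫ s, qf μ τ s * Real.log (qf μ τ s) = Real.log (μ / (Real.exp 1 + μ * τ)) := by
  set aa := μ / (Real.exp 1 + μ * τ) with haa
  have haapos : 0 < aa := aa_pos hμ hτ
  set F := fun s => qf μ τ s * Real.log (qf μ τ s) with hF
  have hneg : ∀ s, s < 0 → F s = 0 := by
    intro s hs; rw [hF]; simp only; rw [qf_zero_of_neg hs]; simp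
  obtain ⟨i1, v1⟩ := setIntegral_Icc_const τ (aa * Real.log aa) F
    (fun s hs => by rw [hF]; simp only; rw [qf_Icc hs]) hτ.le
  have hEaa : Real.log (Real.exp 1 * aa) = 1 + Real.log aa := by
    rw [Real.log_mul (ne_of_gt (Real.exp_pos 1)) (ne_of_gt haapos), Real.log_exp]
  obtain ⟨i2, v2⟩ := setIntegral_Ioi_eval hμ τ
    (Real.exp 1 * aa * (1 + Real.log aa)) (-(Real.exp 1 * aa * μ)) F
    (fun s hs => by
      rw [hF]; simp only
      rw [qf_Ioi hτ.le hs, Real.log_mul (by positivity) (ne_of_gt (Real.exp_pos _)),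
        Real.log_exp, hEaa]
      ring)
  obtain ⟨hint, hval⟩ := split_integral hτ F hneg i1 i2
  refine ⟨hint, ?_⟩
  rw [hval, v1, v2]
  have hd := denom_pos hμ hτ
  have hμ' : μ ≠ 0 := ne_of_gt hμ
  have key : τ * aa + Real.exp 1 * aa / μ = 1 := by
    rw [haa]; field_simp; ring
  calc τ * (aa * Real.log aa) + (Real.exp 1 * aa * (1 + Real.log aa) / μ + -(Real.exp 1 * aa * μ) / μ ^ 2)
      = (τ * aa + Real.exp 1 * aa / μ) * Real.log aa
        + (Real.exp 1 * aa / μ - Real.exp 1 * aa * μ / μ ^ 2) := by ring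
    _ = Real.log aa := by
        rw [key, show Real.exp 1 * aa * μ / μ ^ 2 = Real.exp 1 * aa / μ by
          rw [pow_two]; field_simp]
        ring

lemma integrable_dirac_of_meas {H : ℝ → ℝ} (hH : Measurable H) (x : ℝ) :
    Integrable H (Measure.dirac x) := by
  refine ⟨hH.aestronglyMeasurable, ?_⟩
  rw [HasFiniteIntegral, lintegral_dirac' x (by fun_prop)]
  exact ENNReal.coe_lt_top

/-- the witness measure attaining max entropy -/
noncomputable def wit (μ τ : ℝ) : Measure ℝ :=
  ENNReal.ofReal (μ / (Real.exp 1 + μ * τ) / μ) • Measure.dirac 0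
  + ENNReal.ofReal (μ / (Real.exp 1 + μ * τ)) • volume.restrict (Icc 0 τ)
  + ENNReal.ofReal ((Real.exp 1 - 1) * (μ / (Real.exp 1 + μ * τ)) / μ) • Measure.dirac τ

lemma exp_one_ge_one : (1:ℝ) ≤ Real.exp 1 := by
  linarith [Real.add_one_le_exp 1]

lemma wit_isProb (hμ : 0 < μ) (hτ : 0 < τ) : IsProbabilityMeasure (wit μ τ) := by
  constructor
  set aa := μ / (Real.exp 1 + μ * τ) with haa
  have haapos : 0 < aa := aa_pos hμ hτ
  have hE1 := exp_one_ge_one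
  rw [wit, Measure.add_apply, Measure.add_apply, Measure.smul_apply, Measure.smul_apply,
    Measure.smul_apply, Measure.dirac_apply' _ MeasurableSet.univ,
    Measure.dirac_apply' _ MeasurableSet.univ, Measure.restrict_apply MeasurableSet.univ,
    Set.univ_inter, Real.volume_Icc]
  simp only [Set.indicator_of_mem (Set.mem_univ _), Pi.one_apply, smul_eq_mul, mul_one]
  have hEterm : (0:ℝ) ≤ (Real.exp 1 - 1) * aa / μ :=
    div_nonneg (mul_nonneg (by linarith) haapos.le) hμ.le
  rw [sub_zero, ← ENNReal.ofReal_mul haapos.le, ← ENNReal.ofReal_add (by positivity) (by positivity),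
    ← ENNReal.ofReal_add (by positivity) hEterm]
  rw [show aa / μ + aa * τ + (Real.exp 1 - 1) * aa / μ = 1 by
    rw [haa]; field_simp; ring]
  exact ENNReal.ofReal_one

lemma wit_supp (hμ : 0 < μ) (hτ : 0 < τ) : wit μ τ (Set.Icc 0 τ)ᶜ = 0 := by
  rw [wit, Measure.add_apply, Measure.add_apply, Measure.smul_apply, Measure.smul_apply,
    Measure.smul_apply, Measure.dirac_apply' _ measurableSet_Icc.compl,
    Measure.dirac_apply' _ measurableSet_Icc.compl,
    Measure.restrict_apply measurableSet_Icc.compl, Set.compl_inter_self]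
  rw [Set.indicator_of_notMem (by simp [hτ.le]), Set.indicator_of_notMem (by simp [hτ.le])]
  simp

lemma integral_wit (hμ : 0 < μ) (hτ : 0 < τ) (H : ℝ → ℝ) (hH : Measurable H) (M : ℝ)
    (hbdd : ∀ t, |H t| ≤ M) :
    ∫ t, H t ∂(wit μ τ) = (μ / (Real.exp 1 + μ * τ)) / μ * H 0
      + (μ / (Real.exp 1 + μ * τ)) * (∫ t in Icc 0 τ, H t)
      + (Real.exp 1 - 1) * (μ / (Real.exp 1 + μ * τ)) / μ * H τ := by
  set aa := μ / (Real.exp 1 + μ * τ) with haa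
  have haapos : 0 < aa := aa_pos hμ hτ
  have hE1 := exp_one_ge_one
  have iIcc : IntegrableOn H (Icc 0 τ) :=
    Measure.integrableOn_of_bounded (M := M)
      (by rw [Real.volume_Icc]; exact ENNReal.ofReal_ne_top) hH.aestronglyMeasurable
      (Filter.Eventually.of_forall fun t => by rw [Real.norm_eq_abs]; exact hbdd t)
  have i1 : Integrable H (ENNReal.ofReal (aa / μ) • Measure.dirac 0) :=
    (integrable_dirac_of_meas hH 0).smul_measure ENNReal.ofReal_ne_top
  have i2 : Integrable H (ENNReal.ofReal aa • volume.restrict (Icc 0 τ)) :=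
    iIcc.smul_measure ENNReal.ofReal_ne_top
  have i3 : Integrable H (ENNReal.ofReal ((Real.exp 1 - 1) * aa / μ) • Measure.dirac τ) :=
    (integrable_dirac_of_meas hH τ).smul_measure ENNReal.ofReal_ne_top
  rw [wit, integral_add_measure (i1.add_measure i2) i3, integral_add_measure i1 i2,
    integral_smul_measure, integral_smul_measure, integral_smul_measure,
    integral_dirac' _ _ hH.stronglyMeasurable, integral_dirac' _ _ hH.stronglyMeasurable,
    ENNReal.toReal_ofReal (by positivity), ENNReal.toReal_ofReal haapos.le,
    ENNReal.toReal_ofReal (div_nonneg (mul_nonneg (by linarith) haapos.le) hμ.le)]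
  simp only [smul_eq_mul]

end MaxEnt
end GSection

section HSection
open MeasureTheory Real Set Filter Topology
open scoped ENNReal
namespace MaxEnt

variable {μ τ : ℝ}

lemma J_eval (hμ : 0 < μ) {b s : ℝ} (hb : 0 ≤ b) (hs : b ≤ s) :
    ∫ t in Icc 0 b, eg μ (s - t) = Real.exp (-(μ * (s - b))) - Real.exp (-(μ * s)) := by
  have hcongr : EqOn (fun t => eg μ (s - t)) (fun t => μ * Real.exp (-(μ * (s - t)))) (Icc 0 b) := by
    intro t ht
    simp only [eg]
    rw [if_pos (by linarith [ht.2] : (0:ℝ) ≤ s - t)]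
  rw [setIntegral_congr_fun measurableSet_Icc hcongr, integral_Icc_eq_integral_Ioc,
    ← intervalIntegral.integral_of_le hb]
  have hderiv : ∀ t ∈ uIcc (0:ℝ) b, HasDerivAt (fun t => Real.exp (-(μ * (s - t))))
      (μ * Real.exp (-(μ * (s - t)))) t := by
    intro t _
    have h1 : HasDerivAt (fun t : ℝ => -(μ * (s - t))) μ t := by
      have := ((hasDerivAt_id t).const_mul μ).sub_const (μ * s)
      have h2 := this.congr_deriv (by ring : μ * 1 = μ)
      apply h2.congr_of_eventuallyEq
      filter_upwards with x
      simp only [id_eq]; ring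
    have := h1.exp
    apply this.congr_deriv
    ring
  have hcont : IntervalIntegrable (fun t => μ * Real.exp (-(μ * (s - t)))) volume 0 b := by
    apply Continuous.intervalIntegrable
    fun_prop
  rw [intervalIntegral.integral_eq_sub_of_hasDerivAt hderiv hcont]
  rw [sub_zero]

lemma J_eval_lt (hμ : 0 < μ) {s : ℝ} (h0 : 0 ≤ s) (hsτ : s ≤ τ) :
    ∫ t in Icc 0 τ, eg μ (s - t) = 1 - Real.exp (-(μ * s)) := by
  have hsplit : Icc (0:ℝ) s ∪ Ioc s τ = Icc 0 τ := Icc_union_Ioc_eq_Icc h0 hsτ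
  have hdisj : Disjoint (Icc (0:ℝ) s) (Ioc s τ) := by
    rw [Set.disjoint_left]
    rintro x ⟨_, hxs⟩ ⟨hsx, _⟩
    exact absurd hxs (not_le.mpr hsx)
  have hIbdd : ∀ u : Set ℝ, MeasurableSet u → u ⊆ Icc 0 τ → IntegrableOn (fun t => eg μ (s - t)) u := by
    intro u hu hsub
    apply Measure.integrableOn_of_bounded (M := μ)
    · exact ne_top_of_le_ne_top (by rw [Real.volume_Icc]; exact ENNReal.ofReal_ne_top)
        (measure_mono hsub)
    · exact ((eg_meas μ).comp (measurable_const.sub measurable_id)).aestronglyMeasurable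
    · filter_upwards with t
      rw [Real.norm_eq_abs, abs_of_nonneg (eg_nonneg hμ _)]
      exact eg_le hμ _
  rw [← hsplit, setIntegral_union hdisj measurableSet_Ioc
    (hIbdd _ measurableSet_Icc (by rw [← hsplit]; exact subset_union_left))
    (hIbdd _ measurableSet_Ioc (by rw [← hsplit]; exact subset_union_right))]
  have h2 : ∫ t in Ioc s τ, eg μ (s - t) = 0 := by
    rw [setIntegral_congr_fun measurableSet_Ioc (fun t ht => ?_), integral_zero]
    show eg μ (s - t) = 0
    simp only [eg]
    rw [if_neg (by push_neg; linarith [ht.1])]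
  rw [h2, add_zero, J_eval hμ h0 le_rfl, sub_self, mul_zero, neg_zero, Real.exp_zero]

lemma fconv_wit_eq (hμ : 0 < μ) (hτ : 0 < τ) {s : ℝ} (hsne : s ≠ τ) :
    fconv μ (wit μ τ) s = qf μ τ s := by
  set aa := μ / (Real.exp 1 + μ * τ) with haa
  have haapos : 0 < aa := aa_pos hμ hτ
  by_cases hs : s < 0
  · rw [fconv_zero_of_neg hμ (wit_supp hμ hτ) hs, qf_zero_of_neg hs]
  push_neg at hs
  have hfw : fconv μ (wit μ τ) s = aa / μ * eg μ (s - 0)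
      + aa * (∫ t in Icc 0 τ, eg μ (s - t)) + (Real.exp 1 - 1) * aa / μ * eg μ (s - τ) := by
    rw [fconv]
    exact integral_wit hμ hτ (fun t => eg μ (s - t))
      ((eg_meas μ).comp (measurable_const.sub measurable_id)) μ
      (fun t => by rw [abs_of_nonneg (eg_nonneg hμ _)]; exact eg_le hμ _)
  rcases lt_or_gt_of_ne hsne with hlt | hgt
  · -- 0 ≤ s < τ
    have hegs : eg μ (s - 0) = μ * Real.exp (-(μ * s)) := by
      simp only [eg, sub_zero]
      rw [if_pos hs]
    have hegτ : eg μ (s - τ) = 0 := by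
      simp only [eg]
      rw [if_neg (by push_neg; linarith)]
    rw [hfw, hegs, hegτ, J_eval_lt hμ hs hlt.le, qf_Icc ⟨hs, hlt.le⟩, ← haa]
    field_simp
    ring
  · -- τ < s
    have hegs : eg μ (s - 0) = μ * Real.exp (-(μ * s)) := by
      simp only [eg, sub_zero]
      rw [if_pos hs]
    have hegτ : eg μ (s - τ) = μ * Real.exp (-(μ * (s - τ))) := by
      simp only [eg]
      rw [if_pos (by linarith : (0:ℝ) ≤ s - τ)]
    have hJ : ∫ t in Icc 0 τ, eg μ (s - t)
        = Real.exp (-(μ * (s - τ))) - Real.exp (-(μ * s)) := J_eval hμ hτ.le hgt.le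
    rw [hfw, hegs, hegτ, hJ, qf_Ioi hτ.le hgt, ← haa]
    field_simp
    ring

lemma fconv_wit_ae (hμ : 0 < μ) (hτ : 0 < τ) : fconv μ (wit μ τ) =ᵐ[volume] qf μ τ := by
  have hne : ∀ᵐ s : ℝ, s ≠ τ := by
    rw [ae_iff]
    have : {s : ℝ | ¬ s ≠ τ} = {τ} := by ext s; simp
    rw [this]
    exact Real.volume_singleton
  filter_upwards [hne] with s hs
  exact fconv_wit_eq hμ hτ hs

end MaxEnt
end HSection

section ISection
open MeasureTheory Real Set Filter Topology
open scoped ENNReal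
namespace MaxEnt

variable {μ τ : ℝ}

lemma member_le (hμ : 0 < μ) (hτ : 0 < τ) (ν : Measure ℝ) [IsProbabilityMeasure ν]
    (hsupp : ν (Set.Icc 0 τ)ᶜ = 0) (f : ℝ → ℝ) (hfm : Measurable f) (hf0 : ∀ x, 0 ≤ f x)
    (hmap : Measure.map (fun q : ℝ × ℝ => q.1 + q.2) (ν.prod (expLaw μ))
      = volume.withDensity (fun x => ENNReal.ofReal (f x))) :
    -(∫ x, f x * Real.log (f x)) ≤ Real.log ((Real.exp 1 + μ * τ) / μ) := by
  have hwd : volume.withDensity (fun x => ENNReal.ofReal (fconv μ ν x))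
      = volume.withDensity (fun x => ENNReal.ofReal (f x)) := by
    rw [← conv_law hμ ν, hmap]
  have hae : (fun x => ENNReal.ofReal (fconv μ ν x)) =ᵐ[volume] (fun x => ENNReal.ofReal (f x)) :=
    (withDensity_eq_iff_of_sigmaFinite
      (ENNReal.measurable_ofReal.comp (fconv_meas μ ν)).aemeasurable
      (ENNReal.measurable_ofReal.comp hfm).aemeasurable).mp hwd
  have hae2 : fconv μ ν =ᵐ[volume] f := by
    filter_upwards [hae] with x hx
    exact (ENNReal.ofReal_eq_ofReal_iff (fconv_nonneg hμ ν x) (hf0 x)).mp hx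
  have hint : ∫ x, f x * Real.log (f x) = ∫ x, fconv μ ν x * Real.log (fconv μ ν x) := by
    refine integral_congr_ae ?_
    filter_upwards [hae2] with x hx
    rw [hx]
  obtain ⟨_, hineq⟩ := entropy_core hμ hτ ν hsupp
  rw [hint, log_flip]
  linarith

end MaxEnt
end ISection


end MaxEntDev

section Final
open MeasureTheory MaxEnt

/-- **Maximum `h(S)` for exponential first passage under a deadline constraint.**
If `T ∈ [0,τ]` and `D` is an independent exponential(μ) first-passage time, then
`S = T + D` has a density `f_S` whose differential entropy satisfies
`h(S) = −∫ f_S log f_S ≤ log((e + μτ)/μ)`, and the supremum of `h(T+D)` over all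
probability laws of `T` on `[0,τ]` equals `log((e + μτ)/μ)`. -/
theorem max_entropy_exponential_deadline
    (μ τ : ℝ) (hμ : 0 < μ) (hτ : 0 < τ)
    {Ω : Type} [MeasurableSpace Ω] (P : Measure Ω) [IsProbabilityMeasure P]
    (T D : Ω → ℝ) (hT : Measurable T) (hD : Measurable D)
    (hTsupp : ∀ ω, T ω ∈ Set.Icc 0 τ)
    (hindep : ProbabilityTheory.IndepFun T D P)
    (hDlaw : Measure.map D P = expLaw μ) :
    (∃ f : ℝ → ℝ, Measurable f ∧ (∀ x, 0 ≤ f x) ∧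
        Measure.map (fun ω => T ω + D ω) P
          = volume.withDensity (fun x => ENNReal.ofReal (f x)) ∧
        -(∫ x, f x * Real.log (f x)) ≤ Real.log ((Real.exp 1 + μ * τ) / μ))
    ∧ sSup { h : ℝ | ∃ ν : Measure ℝ, IsProbabilityMeasure ν ∧ ν (Set.Icc 0 τ)ᶜ = 0 ∧
          ∃ f : ℝ → ℝ, Measurable f ∧ (∀ x, 0 ≤ f x) ∧
            Measure.map (fun q : ℝ × ℝ => q.1 + q.2) (ν.prod (expLaw μ))
              = volume.withDensity (fun x => ENNReal.ofReal (f x)) ∧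
            h = -(∫ x, f x * Real.log (f x)) }
        = Real.log ((Real.exp 1 + μ * τ) / μ) := by
  constructor
  · -- part 1
    set νT := Measure.map T P with hνT
    haveI : IsProbabilityMeasure νT := Measure.isProbabilityMeasure_map hT.aemeasurable
    have hsuppT : νT (Set.Icc 0 τ)ᶜ = 0 := by
      rw [hνT, Measure.map_apply hT measurableSet_Icc.compl,
        show T ⁻¹' (Set.Icc 0 τ)ᶜ = ∅ by
          ext ω; simp [hTsupp ω]]
      exact measure_empty
    have hmapTD : Measure.map (fun ω => T ω + D ω) P
        = Measure.map (fun q : ℝ × ℝ => q.1 + q.2) (νT.prod (expLaw μ)) := by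
      rw [hνT, ← hDlaw,
        ← (ProbabilityTheory.indepFun_iff_map_prod_eq_prod_map_map hT.aemeasurable
            hD.aemeasurable).mp hindep,
        Measure.map_map (by fun_prop : Measurable (fun q : ℝ × ℝ => q.1 + q.2)) (hT.prodMk hD)]
      rfl
    refine ⟨fconv μ νT, fconv_meas μ νT, fconv_nonneg hμ νT, ?_, ?_⟩
    · rw [hmapTD, conv_law hμ νT]
    · exact member_le hμ hτ νT hsuppT (fconv μ νT) (fconv_meas μ νT) (fconv_nonneg hμ νT)
        (conv_law hμ νT)
  · -- part 2
    haveI := wit_isProb hμ hτ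
    apply IsGreatest.csSup_eq
    constructor
    · refine ⟨wit μ τ, wit_isProb hμ hτ, wit_supp hμ hτ, qf μ τ, qf_meas μ τ,
        qf_nonneg hμ hτ, ?_, ?_⟩
      · rw [conv_law hμ (wit μ τ)]
        apply withDensity_congr_ae
        filter_upwards [fconv_wit_ae hμ hτ] with x hx
        rw [hx]
      · rw [(qf_entropy hμ hτ).2, ← log_flip]
    · rintro h ⟨ν, hprob, hsupp, f, hfm, hf0, hmap, rfl⟩
      exact member_le hμ hτ ν hsupp f hfm hf0 hmap

end Final
end

section
/- Let M ≥ 1, let g be a first-passage density (probability density on ℝ vanishing on (−∞,0)), and fix launch times t ∈ ℝ^M. Let f_t(s) = ∏_{m=1}^M g(s_m − t_m) be the conditional density of the unordered arrivals, let F_t(s) = ∑_{π ∈ S_M} f_t(s ∘ π) for s in the ordered chamber C = {s₁ < ⋯ < s_M} be the conditional density of the sorted arrivals, and for s ∈ C with F_t(s) > 0 let p_t(π | s) = f_t(s ∘ π)/F_t(s) be the conditional permutation distribution. Then, assuming all three integrals are finite, −∫_{ℝ^M} f_t log f_t = −∫_C F_t log F_t + ∫_C F_t(s) · H(p_t(·|s))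 ds, where H denotes Shannon entropy; that is, h(S | T = t) = h(S⃗ | T = t) + H(Ω | S⃗, T = t). (Paper Theorem 'The Ordering Entropy H(Ω|S⃗,T)' in conditional form.) -/
open MeasureTheory

noncomputable def permEquiv {M : ℕ} (π : Equiv.Perm (Fin M)) :
    (Fin M → ℝ) ≃ᵐ (Fin M → ℝ) :=
  (MeasurableEquiv.piCongrLeft (fun _ => ℝ) π).symm

lemma permEquiv_apply {M : ℕ} (π : Equiv.Perm (Fin M)) (s : Fin M → ℝ) :
    permEquiv π s = s ∘ π := by
  funext m
  simp [permEquiv, MeasurableEquiv.piCongrLeft, MeasurableEquiv.symm,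
    Equiv.piCongrLeft_symm_apply]

lemma permEquiv_mp {M : ℕ} (π : Equiv.Perm (Fin M)) :
    MeasurePreserving (permEquiv π) volume volume :=
  (volume_measurePreserving_piCongrLeft (fun _ => ℝ) π).symm _

lemma plane_null {M : ℕ} {i j : Fin M} (hij : i ≠ j) :
    volume {y : Fin M → ℝ | y i = y j} = 0 := by
  have heq : {y : Fin M → ℝ | y i = y j}
      = (LinearMap.ker ((LinearMap.proj i : (Fin M → ℝ) →ₗ[ℝ] ℝ) - LinearMap.proj j) : Set _) := by
    ext y
    simp [LinearMap.mem_ker, sub_eq_zero]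
  rw [heq]
  apply Measure.addHaar_submodule
  intro h
  have hmem : (Pi.single i 1 : Fin M → ℝ) ∈
      LinearMap.ker ((LinearMap.proj i : (Fin M → ℝ) →ₗ[ℝ] ℝ) - LinearMap.proj j) := by
    rw [h]; trivial
  rw [LinearMap.mem_ker] at hmem
  simp [LinearMap.proj, Pi.single_eq_same, Pi.single_eq_of_ne hij.symm] at hmem

/-- **The ordering entropy, conditionally on the launch times** (`h(S|T=t) =
h(S⃗|T=t) + H(Ω|S⃗,T=t)`).  For a causal first-passage density `g` and launch times
`t`, let `f(s) = ∏_m g(s_m − t_m)` be the density of the unordered arrivals,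
`F(s) = ∑_π f(s ∘ π)` the density of the sorted arrivals on the ordered chamber `C`,
and `H(s)` the Shannon entropy of the conditional permutation distribution
`p(π|s) = f(s∘π)/F(s)`.  If all three integrals are finite, then
`−∫ f log f = −∫_C F log F + ∫_C F·H`. -/
theorem conditional_ordering_entropy_decomposition {M : ℕ} (hM : 1 ≤ M)
    (g : ℝ → ℝ) (hgmeas : Measurable g) (hg0 : ∀ x, 0 ≤ g x)
    (hgcausal : ∀ x < (0 : ℝ), g x = 0) (hgdens : ∫ x, g x = 1)
    (t : Fin M → ℝ)
    (f : (Fin M → ℝ) → ℝ) (hf : ∀ s, f s = ∏ m, g (s m - t m))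
    (F : (Fin M → ℝ) → ℝ) (hF : ∀ s, F s = ∑ π : Equiv.Perm (Fin M), f (s ∘ π))
    (p : Equiv.Perm (Fin M) → (Fin M → ℝ) → ℝ)
    (hp : ∀ π s, p π s = f (s ∘ π) / F s)
    (H : (Fin M → ℝ) → ℝ)
    (hH : ∀ s, H s = -∑ π : Equiv.Perm (Fin M), p π s * Real.log (p π s))
    (C : Set (Fin M → ℝ)) (hC : C = {s : Fin M → ℝ | StrictMono s})
    (h1 : Integrable (fun s => f s * Real.log (f s)))
    (h2 : IntegrableOn (fun s => F s * Real.log (F s)) C)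
    (h3 : IntegrableOn (fun s => F s * H s) C) :
    -(∫ s, f s * Real.log (f s))
      = -(∫ s in C, F s * Real.log (F s)) + ∫ s in C, F s * H s := by
  classical
  have hfnn : ∀ s, 0 ≤ f s := fun s => by
    rw [hf]; exact Finset.prod_nonneg fun m _ => hg0 _
  have hFnn : ∀ s, 0 ≤ F s := fun s => by
    rw [hF]; exact Finset.sum_nonneg fun π _ => hfnn _
  -- pointwise identity
  have key : ∀ s, -(F s * Real.log (F s)) + F s * H s
      = -∑ π : Equiv.Perm (Fin M), f (s ∘ π) * Real.log (f (s ∘ π)) := by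
    intro s
    rcases eq_or_lt_of_le (hFnn s) with h0 | hpos
    · have hz : ∀ π : Equiv.Perm (Fin M), f (s ∘ π) = 0 := by
        have hFz : ∑ π : Equiv.Perm (Fin M), f (s ∘ π) = 0 := (hF s).symm.trans h0.symm
        have h' := (Finset.sum_eq_zero_iff_of_nonneg
            (s := (Finset.univ : Finset (Equiv.Perm (Fin M))))
            (f := fun π : Equiv.Perm (Fin M) => f (s ∘ π))
            (fun π _ => hfnn (s ∘ π))).1 hFz
        exact fun π => h' π (Finset.mem_univ _)
      simp [hH, hp, ← h0, hz]
    · have hne : F s ≠ 0 := ne_of_gt hpos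
      have hterm : ∀ π : Equiv.Perm (Fin M),
          p π s * Real.log (p π s)
            = (f (s ∘ π) * Real.log (f (s ∘ π))) / F s
              - (f (s ∘ π) / F s) * Real.log (F s) := by
        intro π
        rcases eq_or_ne (f (s ∘ π)) 0 with hf0 | hf0
        · simp [hp, hf0]
        · rw [hp, Real.log_div hf0 hne]; ring
      have hsum : ∑ π : Equiv.Perm (Fin M), f (s ∘ π) / F s = 1 := by
        rw [← Finset.sum_div, ← hF, div_self hne]
      rw [hH s, Finset.sum_congr rfl (fun π _ => hterm π), Finset.sum_sub_distrib,
        ← Finset.sum_div, ← Finset.sum_mul, hsum]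
      field_simp
      ring
  set ψ : (Fin M → ℝ) → ℝ := fun s => f s * Real.log (f s) with hψ
  -- chambers
  set A : Equiv.Perm (Fin M) → Set (Fin M → ℝ) :=
    fun σ => {y | StrictMono (y ∘ σ)} with hA
  have hAmeas : ∀ σ, MeasurableSet (A σ) := by
    intro σ
    have : A σ = ⋂ (i : Fin M), ⋂ (j : Fin M), ⋂ (_ : i < j), {y : Fin M → ℝ | y (σ i) < y (σ j)} := by
      ext y
      simp only [hA, Set.mem_setOf_eq, Set.mem_iInter]
      exact ⟨fun h i j hij => h hij, fun h a b hab => h a b hab⟩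
    rw [this]
    exact MeasurableSet.iInter fun i => MeasurableSet.iInter fun j =>
      MeasurableSet.iInter fun _ =>
        measurableSet_lt (measurable_pi_apply _) (measurable_pi_apply _)
  have hdisj : ∀ σ τ : Equiv.Perm (Fin M), σ ≠ τ → Disjoint (A σ) (A τ) := by
    intro σ τ hne
    rw [Set.disjoint_left]
    intro y hyσ hyτ
    have hσ : StrictMono (y ∘ σ) := hyσ
    have hτ : StrictMono (y ∘ τ) := hyτ
    have hrange : Set.range (y ∘ σ) = Set.range (y ∘ τ) := by
      rw [Set.range_comp, Set.range_comp, Equiv.range_eq_univ, Equiv.range_eq_univ]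
    haveI : WellFoundedLT (Fin M) := Finite.to_wellFoundedLT
    have heqc : (y ∘ σ) = (y ∘ τ) := (hσ.range_inj hτ).1 hrange
    have hyinj : Function.Injective y := by
      intro a b hab
      have : (y ∘ σ) (σ.symm a) = (y ∘ σ) (σ.symm b) := by
        simp [Function.comp, hab]
      have := hσ.injective this
      simpa using congrArg σ this
    exact hne (Equiv.ext fun i => hyinj (congrFun heqc i))
  have hsubset : (⋃ σ : Equiv.Perm (Fin M), A σ)ᶜ ⊆
      ⋃ (i : Fin M), ⋃ (j : Fin M), ⋃ (_ : i ≠ j), {y : Fin M → ℝ | y i = y j} := by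
    intro y hy
    by_contra hmem
    simp only [Set.mem_iUnion, Set.mem_setOf_eq, not_exists] at hmem
    have hyinj : Function.Injective y := by
      intro a b hab
      by_contra hne
      exact hmem a b hne hab
    have hmono : Monotone (y ∘ Tuple.sort y) := Tuple.monotone_sort y
    have hstrict : StrictMono (y ∘ Tuple.sort y) :=
      hmono.strictMono_of_injective (hyinj.comp (Tuple.sort y).injective)
    exact hy (Set.mem_iUnion.2 ⟨Tuple.sort y, hstrict⟩)
  have hnull : volume (⋃ σ : Equiv.Perm (Fin M), A σ)ᶜ = 0 := by
    refine measure_mono_null hsubset ?_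
    refine measure_iUnion_null fun i => measure_iUnion_null fun j => ?_
    rcases eq_or_ne i j with rfl | hij
    · simp
    · rw [Set.iUnion_eq_if, if_pos hij]
      exact plane_null hij
  -- A σ as image of C
  have hAC : ∀ σ : Equiv.Perm (Fin M), A σ = permEquiv σ⁻¹ '' C := by
    intro σ
    ext y
    constructor
    · intro hy
      refine ⟨y ∘ σ, ?_, ?_⟩
      · rw [hC]; exact hy
      · rw [permEquiv_apply]
        funext m
        simp
    · rintro ⟨x, hx, rfl⟩
      rw [hC] at hx
      show StrictMono ((permEquiv σ⁻¹ x) ∘ σ)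
      rw [permEquiv_apply]
      have : (x ∘ ⇑σ⁻¹) ∘ ⇑σ = x := by funext m; simp
      rw [this]
      exact hx
  -- integrability of translates
  have hint : ∀ π : Equiv.Perm (Fin M),
      Integrable (fun x => f (x ∘ π) * Real.log (f (x ∘ π))) volume := by
    intro π
    have := ((permEquiv_mp π).integrable_comp_emb
      (permEquiv π).measurableEmbedding).2 h1
    have heq : (ψ ∘ permEquiv π) = fun x => f (x ∘ π) * Real.log (f (x ∘ π)) := by
      funext x
      simp [hψ, Function.comp, permEquiv_apply]
    rwa [heq] at this
  -- decomposition of the full integral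
  have hdecomp : ∫ s, ψ s
      = ∑ σ : Equiv.Perm (Fin M), ∫ y in A σ, ψ y := by
    have h1' : ∫ s, ψ s = ∫ s in ⋃ σ : Equiv.Perm (Fin M), A σ, ψ s := by
      rw [← setIntegral_univ]
      exact setIntegral_congr_set (ae_eq_univ.2 hnull).symm
    rw [h1']
    have hbU : (⋃ σ : Equiv.Perm (Fin M), A σ)
        = ⋃ σ ∈ (Finset.univ : Finset (Equiv.Perm (Fin M))), A σ := by
      simp
    rw [hbU]
    exact integral_biUnion_finset Finset.univ (fun σ _ => hAmeas σ)
      (fun σ _ τ _ h => hdisj σ τ h) (fun σ _ => h1.integrableOn)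
  have hchange : ∀ σ : Equiv.Perm (Fin M),
      ∫ y in A σ, ψ y = ∫ x in C, f (x ∘ ⇑σ⁻¹) * Real.log (f (x ∘ ⇑σ⁻¹)) := by
    intro σ
    rw [hAC σ]
    rw [(permEquiv_mp σ⁻¹).setIntegral_image_emb
      (permEquiv σ⁻¹).measurableEmbedding ψ C]
    refine setIntegral_congr_fun ?_ ?_
    · rw [hC]
      have : {s : Fin M → ℝ | StrictMono s}
          = ⋂ (i : Fin M), ⋂ (j : Fin M), ⋂ (_ : i < j), {y : Fin M → ℝ | y i < y j} := by
        ext y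
        simp only [Set.mem_setOf_eq, Set.mem_iInter]
        exact ⟨fun h i j hij => h hij, fun h a b hab => h a b hab⟩
      rw [this]
      exact MeasurableSet.iInter fun i => MeasurableSet.iInter fun j =>
        MeasurableSet.iInter fun _ =>
          measurableSet_lt (measurable_pi_apply _) (measurable_pi_apply _)
    · intro x _
      simp only [permEquiv_apply, hψ]
  have hsum2 : ∑ σ : Equiv.Perm (Fin M), ∫ y in A σ, ψ y
      = ∑ π : Equiv.Perm (Fin M), ∫ x in C, f (x ∘ π) * Real.log (f (x ∘ π)) := by
    rw [Finset.sum_congr rfl (fun σ _ => hchange σ)]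
    exact Fintype.sum_equiv (Equiv.inv (Equiv.Perm (Fin M))) _ _ (fun σ => rfl)
  -- right hand side
  have hRHS : -(∫ s in C, F s * Real.log (F s)) + ∫ s in C, F s * H s
      = -∑ π : Equiv.Perm (Fin M), ∫ x in C, f (x ∘ π) * Real.log (f (x ∘ π)) := by
    have e1 : ∫ s in C, (-(F s * Real.log (F s)) + F s * H s)
        = -(∫ s in C, F s * Real.log (F s)) + ∫ s in C, F s * H s := by
      have h2' : IntegrableOn (fun s => -(F s * Real.log (F s))) C volume := h2.neg
      rw [integral_add h2' h3, integral_neg]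
    have e2 : ∫ s in C, (-(F s * Real.log (F s)) + F s * H s)
        = ∫ s in C, -∑ π : Equiv.Perm (Fin M), f (s ∘ π) * Real.log (f (s ∘ π)) :=
      integral_congr_ae (Filter.Eventually.of_forall fun s => key s)
    have e3 : ∫ s in C, (-∑ π : Equiv.Perm (Fin M), f (s ∘ π) * Real.log (f (s ∘ π)))
        = -∑ π : Equiv.Perm (Fin M), ∫ x in C, f (x ∘ π) * Real.log (f (x ∘ π)) := by
      rw [integral_neg]
      congr 1
      exact integral_finset_sum Finset.univ fun π _ => (hint π).integrableOn
    rw [← e1, e2, e3]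
  rw [hRHS, hdecomp, hsum2]
end

section
/- Let M ≥ 1, let g be a first-passage density, and let f_T be a hypersymmetric probability density on ℝ^M for the launch times T, with arrivals S = T + D (D having i.i.d. coordinates of density g, independent of T) and sorted arrivals S⃗ = sort(S). Define the differential entropies h(S), h(S⃗), the conditional entropies h(S|T) = ∫ f_T(t) h(S|T=t) dt and h(S⃗|T) = ∫ f_T(t) h(S⃗|T=t) dt, the mutual informations I(S;T) = h(S) − h(S|T) and I(S⃗;T) = h(S⃗) − h(S⃗|T), and the ordering entropy H(Ω|S⃗,T) = ∫ f_T(t) ∫_C F_t(s) H(p_t(·|s)) ds dt. Then, assuming all these quantities are finite, I(S⃗;T) = I(S;T) − (log M! − H(Ω|S⃗,T)). (Paper Theorem 'The mutual information I(S⃗;T) relative to the mutual information I(S;T)'.) -/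
open MeasureTheory Function

namespace MutualInfoAux

variable {M : ℕ}

/-- The measurable equivalence `s ↦ s ∘ π` on `Fin M → ℝ`. -/
def permME (π : Equiv.Perm (Fin M)) : (Fin M → ℝ) ≃ᵐ (Fin M → ℝ) where
  toEquiv := ⟨fun s => s ∘ π, fun s => s ∘ π.symm,
    fun s => funext fun i => by simp, fun s => funext fun i => by simp⟩
  measurable_toFun := measurable_pi_lambda _ fun i => measurable_pi_apply _
  measurable_invFun := measurable_pi_lambda _ fun i => measurable_pi_apply _

@[simp] lemma permME_apply (π : Equiv.Perm (Fin M)) (s : Fin M → ℝ) :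
    permME π s = s ∘ π := rfl

lemma permME_mp (π : Equiv.Perm (Fin M)) :
    MeasurePreserving (permME π) volume volume := by
  have h := MeasureTheory.volume_measurePreserving_piCongrLeft (fun _ : Fin M => ℝ) π.symm
  have hc : ⇑(MeasurableEquiv.piCongrLeft (fun _ : Fin M => ℝ) π.symm) = ⇑(permME π) := by
    funext s b
    have h2 := Equiv.piCongrLeft_apply_apply (fun _ : Fin M => ℝ) π.symm s (π b)
    simp only [Equiv.symm_apply_apply] at h2
    rw [MeasurableEquiv.coe_piCongrLeft]
    exact h2
  exact ⟨(permME π).measurable, by rw [← hc]; exact h.map_eq⟩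

/-- The chamber associated to a permutation. -/
def chamber (π : Equiv.Perm (Fin M)) : Set (Fin M → ℝ) := {u | StrictMono (u ∘ π)}

lemma chamber_measurable (π : Equiv.Perm (Fin M)) :
    MeasurableSet (chamber (M := M) π) := by
  have h : chamber (M := M) π =
      ⋂ (i : Fin M) (j : Fin M) (_ : i < j), {u : Fin M → ℝ | u (π i) < u (π j)} := by
    ext u
    simp only [chamber, Set.mem_setOf_eq, Set.mem_iInter, StrictMono, Function.comp]
    try tauto
  rw [h]
  exact MeasurableSet.iInter fun i => MeasurableSet.iInter fun j =>
    MeasurableSet.iInter fun _ =>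
      measurableSet_lt (measurable_pi_apply _) (measurable_pi_apply _)

lemma chamber_disjoint : Pairwise (Disjoint on (chamber (M := M))) := by
  intro π σ hne
  haveI : WellFoundedLT (Fin M) := inferInstance
  rw [Function.onFun, Set.disjoint_left]
  intro s hπ hσ
  have hπ' : StrictMono (s ∘ ⇑π) := hπ
  have hσ' : StrictMono (s ∘ ⇑σ) := hσ
  have hr : Set.range (s ∘ ⇑π) = Set.range (s ∘ ⇑σ) := by
    rw [Set.range_comp, Set.range_comp, Equiv.range_eq_univ, Equiv.range_eq_univ]
  have heq : s ∘ ⇑π = s ∘ ⇑σ := (hπ'.range_inj hσ').mp hr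
  have hsinj : Function.Injective s := by
    intro a b hab
    have h1 : (s ∘ ⇑π) (π.symm a) = (s ∘ ⇑π) (π.symm b) := by
      simp only [Function.comp, Equiv.apply_symm_apply]
      exact hab
    exact π.symm.injective (hπ'.injective h1)
  exact hne (Equiv.ext fun i => hsinj (congrFun heq i))

lemma mem_iUnion_chamber {s : Fin M → ℝ} (hs : Function.Injective s) :
    ∃ π : Equiv.Perm (Fin M), s ∈ chamber π :=
  ⟨Tuple.sort s,
    (Tuple.monotone_sort s).strictMono_of_injective (hs.comp (Tuple.sort s).injective)⟩

lemma noninj_null : volume {s : Fin M → ℝ | ¬ Function.Injective s} = 0 := by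
  have hsub : {s : Fin M → ℝ | ¬ Function.Injective s} ⊆
      ⋃ (p : Fin M × Fin M) (_ : p.1 ≠ p.2), {s : Fin M → ℝ | s p.1 = s p.2} := by
    intro s hs
    simp only [Set.mem_setOf_eq, Function.Injective, not_forall] at hs
    obtain ⟨a, b, hab, hne⟩ := hs
    exact Set.mem_iUnion.mpr ⟨(a, b), Set.mem_iUnion.mpr ⟨hne, hab⟩⟩
  refine measure_mono_null hsub
    (measure_iUnion_null fun p => measure_iUnion_null fun hp => ?_)
  have hset : {s : Fin M → ℝ | s p.1 = s p.2} =
      (LinearMap.ker ((LinearMap.proj p.1 : (Fin M → ℝ) →ₗ[ℝ] ℝ) - LinearMap.proj p.2) :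
        Set (Fin M → ℝ)) := by
    ext s
    simp [LinearMap.mem_ker, sub_eq_zero]
  rw [hset]
  refine Measure.addHaar_submodule _ _ ?_
  intro htop
  have hmem := Submodule.eq_top_iff'.mp htop (Pi.single p.1 (1 : ℝ))
  simp only [LinearMap.mem_ker, LinearMap.sub_apply, LinearMap.proj_apply,
    Pi.single_eq_same, Pi.single_eq_of_ne (Ne.symm hp), sub_zero] at hmem
  exact one_ne_zero hmem

lemma sum_chamber_integral (φ : (Fin M → ℝ) → ℝ) (hφ : Integrable φ) :
    ∑ π : Equiv.Perm (Fin M), ∫ s in chamber π, φ s = ∫ s, φ s := by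
  have hU : ∫ s in ⋃ π : Equiv.Perm (Fin M), chamber (M := M) π, φ s
      = ∑ π : Equiv.Perm (Fin M), ∫ s in chamber π, φ s :=
    integral_iUnion_fintype chamber_measurable chamber_disjoint (fun π => hφ.integrableOn)
  have hcompl : volume (⋃ π : Equiv.Perm (Fin M), chamber (M := M) π)ᶜ = 0 := by
    refine measure_mono_null ?_ noninj_null
    intro s hs
    simp only [Set.mem_compl_iff, Set.mem_iUnion, not_exists] at hs
    intro hinj
    obtain ⟨π, hπ⟩ := mem_iUnion_chamber hinj
    exact hs π hπ
  have hadd := integral_add_compl (MeasurableSet.iUnion (chamber_measurable (M := M))) hφ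
  rw [← hU, ← hadd]
  have hz : ∫ s in (⋃ π : Equiv.Perm (Fin M), chamber (M := M) π)ᶜ, φ s = 0 := by
    rw [Measure.restrict_eq_zero.mpr hcompl]
    exact integral_zero_measure φ
  rw [hz, add_zero]

lemma permME_preimage_chamber (π : Equiv.Perm (Fin M)) :
    (⇑(permME π)) ⁻¹' (chamber (M := M) π⁻¹) = {u : Fin M → ℝ | StrictMono u} := by
  ext s
  simp only [Set.mem_preimage, permME_apply, chamber, Set.mem_setOf_eq]
  have : (s ∘ ⇑π) ∘ ⇑(π⁻¹) = s := by
    funext i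
    simp
  rw [this]

lemma setIntegral_comp_perm (φ : (Fin M → ℝ) → ℝ) (π : Equiv.Perm (Fin M)) :
    ∫ s in {u : Fin M → ℝ | StrictMono u}, φ (s ∘ π) = ∫ u in chamber π⁻¹, φ u := by
  rw [← permME_preimage_chamber π]
  exact (permME_mp π).setIntegral_preimage_emb (permME π).measurableEmbedding φ _

lemma integrableOn_comp_perm (φ : (Fin M → ℝ) → ℝ) (hφ : Integrable φ)
    (π : Equiv.Perm (Fin M)) :
    IntegrableOn (fun s : Fin M → ℝ => φ (s ∘ π)) {u : Fin M → ℝ | StrictMono u} := by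
  rw [← permME_preimage_chamber π]
  exact ((permME_mp π).integrableOn_comp_preimage
    (permME π).measurableEmbedding).mpr hφ.integrableOn

lemma sum_setIntegral_comp (φ : (Fin M → ℝ) → ℝ) (hφ : Integrable φ) :
    ∑ π : Equiv.Perm (Fin M), ∫ s in {u : Fin M → ℝ | StrictMono u}, φ (s ∘ π)
      = ∫ s, φ s := by
  have h1 : ∀ π : Equiv.Perm (Fin M),
      ∫ s in {u : Fin M → ℝ | StrictMono u}, φ (s ∘ π) = ∫ u in chamber π⁻¹, φ u :=
    setIntegral_comp_perm φ
  calc ∑ π : Equiv.Perm (Fin M), ∫ s in {u : Fin M → ℝ | StrictMono u}, φ (s ∘ π)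
      = ∑ π : Equiv.Perm (Fin M), ∫ u in chamber π⁻¹, φ u :=
        Finset.sum_congr rfl fun π _ => h1 π
    _ = ∑ π : Equiv.Perm (Fin M), ∫ u in chamber π, φ u := by
        refine Fintype.sum_equiv ⟨fun π => π⁻¹, fun π => π⁻¹, fun π => inv_inv π,
          fun π => inv_inv π⟩ _ _ fun π => rfl
    _ = ∫ s, φ s := sum_chamber_integral φ hφ

end MutualInfoAux

/-- **`I(S⃗;T) = I(S;T) − (log M! − H(Ω|S⃗,T))`.**  For a causal first-passage density
`g` and a hypersymmetric launch density `f_T` on `ℝ^M`, with conditional arrival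
density `fc t s = ∏_m g(s_m − t_m)`, sorted-arrival conditional density
`Fc t s = ∑_π fc t (s∘π)` on the ordered chamber `C`, conditional permutation entropy
`Hp`, marginal arrival density `fS`, sorted marginal density `FS`, and the entropies
`h(S), h(S⃗), h(S|T), h(S⃗|T)` and ordering entropy `H(Ω|S⃗,T)` defined by the
corresponding integrals (all assumed finite), the mutual informations
`I(S;T) = h(S)−h(S|T)` and `I(S⃗;T) = h(S⃗)−h(S⃗|T)` satisfy
`I(S⃗;T) = I(S;T) − (log M! − H(Ω|S⃗,T))`. -/
theorem mutual_information_ordered_vs_unordered {M : ℕ} (hM : 1 ≤ M)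
    (g : ℝ → ℝ) (hgmeas : Measurable g) (hg0 : ∀ x, 0 ≤ g x)
    (hgcausal : ∀ x < (0 : ℝ), g x = 0) (hgdens : ∫ x, g x = 1)
    (fT : (Fin M → ℝ) → ℝ) (hfTmeas : Measurable fT) (hfT0 : ∀ t, 0 ≤ fT t)
    (hfT1 : ∫ t, fT t = 1)
    (hsymm : ∀ (π : Equiv.Perm (Fin M)) (x : Fin M → ℝ), fT (x ∘ π) = fT x)
    (fc : (Fin M → ℝ) → (Fin M → ℝ) → ℝ)
    (hfc : ∀ t s, fc t s = ∏ m, g (s m - t m))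
    (Fc : (Fin M → ℝ) → (Fin M → ℝ) → ℝ)
    (hFc : ∀ t s, Fc t s = ∑ π : Equiv.Perm (Fin M), fc t (s ∘ π))
    (Hp : (Fin M → ℝ) → (Fin M → ℝ) → ℝ)
    (hHp : ∀ t s, Hp t s = -∑ π : Equiv.Perm (Fin M),
        (fc t (s ∘ π) / Fc t s) * Real.log (fc t (s ∘ π) / Fc t s))
    (fS : (Fin M → ℝ) → ℝ) (hfS : ∀ s, fS s = ∫ t, fT t * fc t s)
    (FS : (Fin M → ℝ) → ℝ) (hFS : ∀ s, FS s = ∑ π : Equiv.Perm (Fin M), fS (s ∘ π))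
    (C : Set (Fin M → ℝ)) (hC : C = {s : Fin M → ℝ | StrictMono s})
    (hS hSvec hScondT hSveccondT HOrd : ℝ)
    (hhS : hS = -(∫ s, fS s * Real.log (fS s)))
    (hhSvec : hSvec = -(∫ s in C, FS s * Real.log (FS s)))
    (hhScondT : hScondT = ∫ t, fT t * -(∫ s, fc t s * Real.log (fc t s)))
    (hhSveccondT : hSveccondT = ∫ t, fT t * -(∫ s in C, Fc t s * Real.log (Fc t s)))
    (hHOrd : HOrd = ∫ t, fT t * ∫ s in C, Fc t s * Hp t s)
    -- finiteness of all the above quantities: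
    (i1 : Integrable (fun s => fS s * Real.log (fS s)))
    (i2 : IntegrableOn (fun s => FS s * Real.log (FS s)) C)
    (i3 : ∀ t, Integrable (fun s => fc t s * Real.log (fc t s)))
    (i4 : ∀ t, IntegrableOn (fun s => Fc t s * Real.log (Fc t s)) C)
    (i5 : ∀ t, IntegrableOn (fun s => Fc t s * Hp t s) C)
    (i6 : Integrable (fun t => fT t * -(∫ s, fc t s * Real.log (fc t s))))
    (i7 : Integrable (fun t => fT t * -(∫ s in C, Fc t s * Real.log (Fc t s))))
    (i8 : Integrable (fun t => fT t * ∫ s in C, Fc t s * Hp t s)) :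
    hSvec - hSveccondT
      = (hS - hScondT) - (Real.log (Nat.factorial M : ℝ) - HOrd) := by
  subst hC
  -- integrability of `g` and `fT`
  have hgInt : Integrable g := by
    by_contra h
    rw [MeasureTheory.integral_undef h] at hgdens
    exact one_ne_zero hgdens.symm
  have hfTInt : Integrable fT := by
    by_contra h
    rw [MeasureTheory.integral_undef h] at hfT1
    exact one_ne_zero hfT1.symm
  -- basic facts about `fc`
  have hfc0 : ∀ t s, 0 ≤ fc t s := fun t s => by
    rw [hfc]; exact Finset.prod_nonneg fun m _ => hg0 _
  have hfcInt : ∀ t, Integrable (fc t) := by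
    intro t
    have h : fc t = fun s : Fin M → ℝ => ∏ m, (fun x => g (x - t m)) (s m) :=
      funext fun s => hfc t s
    rw [h]
    exact Integrable.fintype_prod fun m => hgInt.comp_sub_right (t m)
  have hfc1 : ∀ t, ∫ s, fc t s = 1 := by
    intro t
    have h : (fun s : Fin M → ℝ => fc t s) = fun s => ∏ m, (fun x => g (x - t m)) (s m) :=
      funext fun s => hfc t s
    rw [h]
    refine (MeasureTheory.integral_fintype_prod_eq_prod (f := fun (m : Fin M) x => g (x - t m))
      (μ := fun _ => volume)).trans ?_
    refine Finset.prod_eq_one fun m _ => ?_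
    rw [integral_sub_right_eq_self g (t m)]
    exact hgdens
  -- joint integrability of `(t, s) ↦ fT t * fc t s`
  have hjm : Measurable (fun p : (Fin M → ℝ) × (Fin M → ℝ) => fT p.1 * fc p.1 p.2) := by
    have h : (fun p : (Fin M → ℝ) × (Fin M → ℝ) => fT p.1 * fc p.1 p.2)
        = fun p => fT p.1 * ∏ m, g (p.2 m - p.1 m) := funext fun p => by rw [hfc]
    rw [h]
    exact (hfTmeas.comp measurable_fst).mul <| Finset.measurable_prod _ fun m _ =>
      hgmeas.comp (((measurable_pi_apply m).comp measurable_snd).sub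
        ((measurable_pi_apply m).comp measurable_fst))
  have hprodInt : Integrable (fun p : (Fin M → ℝ) × (Fin M → ℝ) => fT p.1 * fc p.1 p.2)
      (volume.prod volume) := by
    refine (MeasureTheory.integrable_prod_iff hjm.aestronglyMeasurable).mpr ⟨?_, ?_⟩
    · exact Filter.Eventually.of_forall fun t => (hfcInt t).const_mul (fT t)
    · have h : (fun t : Fin M → ℝ => ∫ s, ‖fT t * fc t s‖) = fT := by
        funext t
        have h1 : (fun s : Fin M → ℝ => ‖fT t * fc t s‖) = fun s => fT t * fc t s :=
          funext fun s => Real.norm_of_nonneg (mul_nonneg (hfT0 t) (hfc0 t s))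
        rw [h1, MeasureTheory.integral_const_mul, hfc1 t, mul_one]
      rw [h]
      exact hfTInt
  have hfSeq : fS = fun s => ∫ t, fT t * fc t s := funext hfS
  have hfSInt : Integrable fS := by
    rw [hfSeq]
    exact hprodInt.integral_prod_right
  have hfSmass : ∫ s, fS s = 1 := by
    have hswap := MeasureTheory.integral_integral_swap (f := fun t s => fT t * fc t s) hprodInt
    rw [hfSeq, ← hswap]
    have h : (fun t => ∫ s, fT t * fc t s) = fT := by
      funext t
      rw [MeasureTheory.integral_const_mul, hfc1 t, mul_one]
    rw [h]
    exact hfT1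
  -- symmetry of `fS`
  have hfSsymm : ∀ (π : Equiv.Perm (Fin M)) (s : Fin M → ℝ), fS (s ∘ π) = fS s := by
    intro π s
    rw [hfS, hfS]
    have hcv := (MutualInfoAux.permME_mp π).integral_comp
      (MutualInfoAux.permME π).measurableEmbedding (fun t => fT t * fc t (s ∘ π))
    rw [← hcv]
    congr 1
    funext t
    show fT (t ∘ π) * fc (t ∘ π) (s ∘ π) = fT t * fc t s
    rw [hsymm π t]
    congr 1
    rw [hfc, hfc]
    exact Equiv.prod_comp π (fun m => g (s m - t m))
  -- chamber decomposition machinery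
  have hkey : ∀ (φ : (Fin M → ℝ) → ℝ), Integrable φ →
      ∑ π : Equiv.Perm (Fin M), ∫ s in {u : Fin M → ℝ | StrictMono u}, φ (s ∘ π)
        = ∫ s, φ s := MutualInfoAux.sum_setIntegral_comp
  have hsymkey : ∀ (φ : (Fin M → ℝ) → ℝ), Integrable φ →
      (∀ (π : Equiv.Perm (Fin M)) (s : Fin M → ℝ), φ (s ∘ π) = φ s) →
      (Nat.factorial M : ℝ) * ∫ s in {u : Fin M → ℝ | StrictMono u}, φ s = ∫ s, φ s := by
    intro φ hφ hsym
    have h := hkey φ hφ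
    have h2 : ∀ π : Equiv.Perm (Fin M),
        ∫ s in {u : Fin M → ℝ | StrictMono u}, φ (s ∘ π)
          = ∫ s in {u : Fin M → ℝ | StrictMono u}, φ s := by
      intro π
      congr 1
      funext s
      exact hsym π s
    rw [Finset.sum_congr rfl fun π _ => h2 π, Finset.sum_const, Finset.card_univ,
      Fintype.card_perm, Fintype.card_fin, nsmul_eq_mul] at h
    exact h
  have hA1 : (Nat.factorial M : ℝ)
      * ∫ s in {u : Fin M → ℝ | StrictMono u}, fS s * Real.log (fS s)
      = ∫ s, fS s * Real.log (fS s) :=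
    hsymkey _ i1 (fun π s => by rw [hfSsymm π s])
  have hA2 : (Nat.factorial M : ℝ) * ∫ s in {u : Fin M → ℝ | StrictMono u}, fS s = 1 := by
    rw [hsymkey fS hfSInt hfSsymm]
    exact hfSmass
  -- pointwise identity for FS
  have hFSpt : ∀ s, FS s = (Nat.factorial M : ℝ) * fS s := by
    intro s
    rw [hFS, Finset.sum_congr rfl fun π _ => hfSsymm π s, Finset.sum_const,
      Finset.card_univ, Fintype.card_perm, Fintype.card_fin, nsmul_eq_mul]
  have hMfac0 : (Nat.factorial M : ℝ) ≠ 0 := Nat.cast_ne_zero.mpr (Nat.factorial_ne_zero M)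
  have hFSlog : ∀ s, FS s * Real.log (FS s)
      = (Nat.factorial M : ℝ) * (fS s * Real.log (fS s))
        + Real.log (Nat.factorial M : ℝ) * ((Nat.factorial M : ℝ) * fS s) := by
    intro s
    rw [hFSpt s]
    by_cases h : fS s = 0
    · simp [h]
    · rw [Real.log_mul hMfac0 h]
      ring
  -- Equality A : the ordered marginal entropy integral
  have hEqA : ∫ s in {u : Fin M → ℝ | StrictMono u}, FS s * Real.log (FS s)
      = (∫ s, fS s * Real.log (fS s)) + Real.log (Nat.factorial M : ℝ) := by
    have hfun : (fun s => FS s * Real.log (FS s)) = fun s =>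
        (Nat.factorial M : ℝ) * (fS s * Real.log (fS s))
          + Real.log (Nat.factorial M : ℝ) * ((Nat.factorial M : ℝ) * fS s) := funext hFSlog
    rw [hfun, MeasureTheory.integral_add ((i1.integrableOn).const_mul _)
      (((hfSInt.integrableOn).const_mul _).const_mul _),
      MeasureTheory.integral_const_mul, MeasureTheory.integral_const_mul,
      MeasureTheory.integral_const_mul, hA1, hA2, mul_one]
  -- Equality B : per-t identity
  have hFc0 : ∀ t s, 0 ≤ Fc t s := fun t s => by
    rw [hFc]; exact Finset.sum_nonneg fun π _ => hfc0 t _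
  have hFczero : ∀ t s, Fc t s = 0 → ∀ π : Equiv.Perm (Fin M), fc t (s ∘ π) = 0 := by
    intro t s h0 π
    rw [hFc] at h0
    exact (Finset.sum_eq_zero_iff_of_nonneg (fun π _ => hfc0 t _)).mp h0 π (Finset.mem_univ π)
  have hBpt : ∀ t s, Fc t s * Hp t s
      = Fc t s * Real.log (Fc t s)
        - ∑ π : Equiv.Perm (Fin M), fc t (s ∘ π) * Real.log (fc t (s ∘ π)) := by
    intro t s
    rw [hHp, mul_neg, Finset.mul_sum]
    have hterm : ∀ π : Equiv.Perm (Fin M),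
        Fc t s * (fc t (s ∘ π) / Fc t s * Real.log (fc t (s ∘ π) / Fc t s))
        = fc t (s ∘ π) * Real.log (fc t (s ∘ π)) - fc t (s ∘ π) * Real.log (Fc t s) := by
      intro π
      by_cases hF : Fc t s = 0
      · simp [hF, hFczero t s hF π]
      by_cases ha : fc t (s ∘ π) = 0
      · simp [ha]
      rw [Real.log_div ha hF]
      have hFa : Fc t s * (fc t (s ∘ π) / Fc t s) = fc t (s ∘ π) := by
        field_simp
      calc Fc t s * (fc t (s ∘ π) / Fc t s
              * (Real.log (fc t (s ∘ π)) - Real.log (Fc t s)))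
          = Fc t s * (fc t (s ∘ π) / Fc t s)
              * (Real.log (fc t (s ∘ π)) - Real.log (Fc t s)) := by ring
        _ = fc t (s ∘ π) * (Real.log (fc t (s ∘ π)) - Real.log (Fc t s)) := by rw [hFa]
        _ = _ := by ring
    rw [Finset.sum_congr rfl fun π _ => hterm π, Finset.sum_sub_distrib,
      ← Finset.sum_mul, ← hFc]
    ring
  have hEqB : ∀ t, ∫ s in {u : Fin M → ℝ | StrictMono u}, Fc t s * Hp t s
      = (∫ s in {u : Fin M → ℝ | StrictMono u}, Fc t s * Real.log (Fc t s))
        - ∫ s, fc t s * Real.log (fc t s) := by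
    intro t
    have hGint : ∀ π : Equiv.Perm (Fin M),
        IntegrableOn (fun s : Fin M → ℝ => fc t (s ∘ π) * Real.log (fc t (s ∘ π)))
          {u : Fin M → ℝ | StrictMono u} :=
      fun π => MutualInfoAux.integrableOn_comp_perm
        (fun u => fc t u * Real.log (fc t u)) (i3 t) π
    have hfun : (fun s => Fc t s * Hp t s) = fun s =>
        Fc t s * Real.log (Fc t s)
          - ∑ π : Equiv.Perm (Fin M), fc t (s ∘ π) * Real.log (fc t (s ∘ π)) :=
      funext (hBpt t)
    have hsum : ∑ π : Equiv.Perm (Fin M),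
        ∫ s in {u : Fin M → ℝ | StrictMono u}, fc t (s ∘ π) * Real.log (fc t (s ∘ π))
          = ∫ s, fc t s * Real.log (fc t s) :=
      hkey (fun u => fc t u * Real.log (fc t u)) (i3 t)
    rw [hfun, MeasureTheory.integral_sub (i4 t)
      (MeasureTheory.integrable_finset_sum _ fun π _ => hGint π),
      MeasureTheory.integral_finset_sum _ fun π _ => hGint π, hsum]
  -- conditional entropies
  have hcond : hSveccondT = hScondT - HOrd := by
    rw [hhSveccondT, hhScondT, hHOrd]
    have hfun : (fun t => fT t
          * -(∫ s in {u : Fin M → ℝ | StrictMono u}, Fc t s * Real.log (Fc t s)))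
        = fun t => fT t * -(∫ s, fc t s * Real.log (fc t s))
          - fT t * (∫ s in {u : Fin M → ℝ | StrictMono u}, Fc t s * Hp t s) := by
      funext t
      rw [hEqB t]
      ring
    rw [hfun, MeasureTheory.integral_sub i6 i8]
  have hvec : hSvec = hS - Real.log (Nat.factorial M : ℝ) := by
    rw [hhSvec, hhS, hEqA]
    ring
  rw [hvec, hcond]
  ring
end
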